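/- arXiv:2301.01676 — 5 statements merged into one kernel-verified Lean document; each statement's English description precedes it below -/
import Mathlib

section
/- A binary de Bruijn sequence of order k exists: there is a cyclic sequence σ of length 2^k over alphabet {0,1} such that every binary string of length k occurs exactly once as a (cyclic) substring of σ. -/
namespace DBaux

instance instDecEU {α : Type*} [Fintype α] [DecidableEq α] (p : α → Prop) [DecidablePred p] :
    Decidable (∃! a, p a) :=
  decidable_of_iff (∃ a, p a ∧ ∀ b, p b → b = a) Iff.rfl

theorem per_mul {n : ℕ} {s : ℕ → ZMod 2} (h : ∀ i, s (i + n) = s i) (q x : ℕ) :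
    s (x + n * q) = s x := by
  induction q with
  | zero => simp
  | succ q ih =>
      have h1 : x + n * (q + 1) = (x + n * q) + n := by ring
      rw [h1, h, ih]

theorem sum_shift_one {n : ℕ} {s : ℕ → ZMod 2} (h : ∀ i, s (i + n) = s i) (x : ℕ) :
    ∑ j ∈ Finset.range n, s (x + 1 + j) = ∑ j ∈ Finset.range n, s (x + j) := by
  cases n with
  | zero => simp
  | succ m =>
      rw [Finset.sum_range_succ, Finset.sum_range_succ']
      have h1 : s (x + 1 + m) = s x := by
        rw [show x + 1 + m = x + (m + 1) by ring]; exact h x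
      have h2 : ∀ j, s (x + (j + 1)) = s (x + 1 + j) := by
        intro j; rw [show x + (j + 1) = x + 1 + j by ring]
      simp only [h1, h2, add_zero]

theorem sum_shift {n : ℕ} {s : ℕ → ZMod 2} (h : ∀ i, s (i + n) = s i) (x : ℕ) :
    ∑ j ∈ Finset.range n, s (x + j) = ∑ j ∈ Finset.range n, s j := by
  induction x with
  | zero => simp
  | succ x ih => rw [show x + 1 = x + 1 from rfl, ← ih]; exact sum_shift_one h x

theorem cancel_lt {n q y z : ℕ} (hy : y < n) (hz : z < n)
    (h : (q + y) % n = (q + z) % n) : y = z := by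
  have h2 : y % n = z % n := Nat.ModEq.add_left_cancel' q h
  rwa [Nat.mod_eq_of_lt hy, Nat.mod_eq_of_lt hz] at h2

theorem step {k : ℕ} (hk : 1 ≤ k) {s : ℕ → ZMod 2}
    (hper : ∀ i, s (i + 2 ^ k) = s i)
    (hdb : ∀ w : Fin k → ZMod 2, ∃! a : ℕ, a < 2 ^ k ∧ ∀ j : Fin k, s (a + (j : ℕ)) = w j)
    (hsum : ∑ j ∈ Finset.range (2 ^ k), s j = 0) :
    ∃ r : ℕ → ZMod 2, (∀ i, r (i + 2 ^ (k + 1)) = r i) ∧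
      (∀ w : Fin (k + 1) → ZMod 2,
        ∃! a : ℕ, a < 2 ^ (k + 1) ∧ ∀ j : Fin (k + 1), r (a + (j : ℕ)) = w j) ∧
      ∑ j ∈ Finset.range (2 ^ (k + 1)), r j = 0 := by
  set n := 2 ^ k with hn
  have hn0 : 0 < n := pow_pos (by norm_num) k
  have hkn : k ≤ n := (Nat.lt_two_pow_self (n := k)).le
  have hN : 2 ^ (k + 1) = 2 * n := by rw [hn, pow_succ]; ring
  obtain ⟨p, ⟨hp, hp1⟩, -⟩ := hdb 1
  have hsp : ∀ m, m < k → s (p + m) = 1 := fun m hm => hp1 ⟨m, hm⟩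
  set t : ℕ → ZMod 2 := fun i => ∑ j ∈ Finset.range i, s j with htdef
  have ht_add : ∀ a m, t (a + m) = t a + ∑ j ∈ Finset.range m, s (a + j) := by
    intro a m; simp only [htdef]; rw [Finset.sum_range_add]
  have ht_per : ∀ i, t (i + n) = t i := by
    intro i; rw [ht_add, sum_shift hper i, hsum, add_zero]
  have ht_succ : ∀ i, t (i + 1) = t i + s i := by
    intro i; simp only [htdef]; rw [Finset.sum_range_succ]
  have two_self : ∀ x : ZMod 2, x + 1 + 1 = x := by decide
  have hmatch : ∀ m, m < k → t (p + 1 + m) = t (p + m) + 1 := by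
    intro m hm
    rw [show p + 1 + m = (p + m) + 1 by ring, ht_succ, hsp m hm]
  set r : ℕ → ZMod 2 := fun i => if i % (2 * n) < n then t (p + i % (2 * n))
      else t (p + 1 + (i % (2 * n) - n)) + 1 with hrdef
  have h2n : 0 < 2 * n := by omega
  have r_eq1 : ∀ i, i < n + k → r i = t (p + i) := by
    intro i hi
    have him : i % (2 * n) = i := Nat.mod_eq_of_lt (by omega)
    by_cases h : i < n
    · simp only [hrdef, him, if_pos h]
    · simp only [hrdef, him, if_neg h]
      have hm : i - n < k := by omega
      rw [hmatch (i - n) hm]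
      rw [show p + i = (p + (i - n)) + n by omega, ht_per]
      exact two_self _
  have r_eq2 : ∀ i, n ≤ i → i < 2 * n + k → r i = t (p + 1 + (i - n)) + 1 := by
    intro i hi1 hi2
    by_cases h : i < 2 * n
    · have him : i % (2 * n) = i := Nat.mod_eq_of_lt h
      simp only [hrdef, him, if_neg (by omega : ¬ i < n)]
    · have him : i % (2 * n) = i - 2 * n := by
        conv_lhs => rw [show i = (i - 2 * n) + 2 * n by omega]
        rw [Nat.add_mod_right]
        exact Nat.mod_eq_of_lt (by omega)
      have hm : i - 2 * n < k := by omega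
      simp only [hrdef, him, if_pos (by omega : i - 2 * n < n)]
      rw [show i - n = (i - 2 * n) + n by omega,
        show p + 1 + ((i - 2 * n) + n) = (p + 1 + (i - 2 * n)) + n by ring,
        ht_per, hmatch _ hm]
      exact (two_self _).symm
  refine ⟨r, ?_, ?_, ?_⟩
  · intro i
    rw [hN]
    simp only [hrdef, Nat.add_mod_right]
  · intro w
    set d : Fin k → ZMod 2 := fun j => w j.succ - w j.castSucc with hd
    have win_iff : ∀ (x : ℕ) (v : Fin (k + 1) → ZMod 2),
        (∀ j : Fin (k + 1), t (x + (j : ℕ)) = v j) ↔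
          (t x = v 0 ∧ ∀ j : Fin k, s (x + (j : ℕ)) = v j.succ - v j.castSucc) := by
      intro x v
      constructor
      · intro h
        refine ⟨by simpa using h 0, fun j => ?_⟩
        have h1 := h j.succ
        have h2 := h j.castSucc
        rw [Fin.val_succ] at h1
        rw [Fin.coe_castSucc] at h2
        rw [show x + ((j : ℕ) + 1) = (x + j) + 1 by ring, ht_succ, h2] at h1
        linear_combination h1
      · rintro ⟨h0, hs'⟩
        have key : ∀ m, ∀ hm : m < k + 1, t (x + m) = v ⟨m, hm⟩ := by
          intro m
          induction m with
          | zero => intro hm; simpa using h0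
          | succ m ih =>
              intro hm
              have hmk : m < k := by omega
              rw [show x + (m + 1) = (x + m) + 1 by ring, ht_succ, ih (by omega)]
              have h3 := hs' ⟨m, hmk⟩
              simp only at h3
              rw [h3]
              have e1 : (⟨m, hmk⟩ : Fin k).succ = ⟨m + 1, hm⟩ := rfl
              have e2 : (⟨m, hmk⟩ : Fin k).castSucc = (⟨m, by omega⟩ : Fin (k + 1)) := rfl
              rw [e1, e2]
              have e3 : v (⟨m, by omega⟩ : Fin (k + 1)) = v ⟨m, by omega⟩ := rfl
              linear_combination e3
        intro j
        have := key j.val j.isLt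
        simpa using this
    obtain ⟨a0, ⟨ha0, ha0w⟩, ha0u⟩ := hdb d
    have huniq : ∀ x : ℕ, (∀ j : Fin k, s (x + (j : ℕ)) = d j) → x % n = a0 := by
      intro x hx
      refine ha0u (x % n) ⟨Nat.mod_lt x hn0, fun j => ?_⟩
      have hxq : x % n + n * (x / n) = x := Nat.mod_add_div x n
      have e : x + (j : ℕ) = (x % n + j) + n * (x / n) := by omega
      have := per_mul hper (x / n) (x % n + j)
      rw [← e] at this
      rw [← this]; exact hx j
    set c := t a0 with hc
    set i1 := if p ≤ a0 then a0 - p else a0 + n - p with hi1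
    have hi1n : i1 < n := by rw [hi1]; split <;> omega
    have hpi1 : p + i1 = a0 ∨ p + i1 = a0 + n := by
      rw [hi1]; split
      · left; omega
      · right; omega
    set m2 := if p + 1 ≤ a0 then a0 - (p + 1) else a0 + n - (p + 1) with hm2
    have hm2n : m2 < n := by rw [hm2]; split <;> omega
    have hpm2 : p + 1 + m2 = a0 ∨ p + 1 + m2 = a0 + n := by
      rw [hm2]; split
      · left; omega
      · right; omega
    have hmodn : ∀ x : ℕ, x = a0 ∨ x = a0 + n → x % n = a0 := by
      rintro x (rfl | rfl)
      · exact Nat.mod_eq_of_lt ha0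
      · rw [Nat.add_mod_right]; exact Nat.mod_eq_of_lt ha0
    have ht1 : t (p + i1) = c := by
      rcases hpi1 with h | h <;> rw [h]
      exact ht_per a0
    have ht2 : t (p + 1 + m2) = c := by
      rcases hpm2 with h | h <;> rw [h]
      exact ht_per a0
    have hs1 : ∀ j : Fin k, s (p + i1 + (j : ℕ)) = d j := by
      intro j
      rcases hpi1 with h | h
      · rw [h]; exact ha0w j
      · rw [h, show a0 + n + (j : ℕ) = (a0 + j) + n by ring, hper]; exact ha0w j
    have hs2 : ∀ j : Fin k, s (p + 1 + m2 + (j : ℕ)) = d j := by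
      intro j
      rcases hpm2 with h | h
      · rw [h]; exact ha0w j
      · rw [h, show a0 + n + (j : ℕ) = (a0 + j) + n by ring, hper]; exact ha0w j
    have hrwin1 : ∀ a, a < n → ((∀ j : Fin (k + 1), r (a + (j : ℕ)) = w j) ↔
        (t (p + a) = w 0 ∧ ∀ j : Fin k, s (p + a + (j : ℕ)) = d j)) := by
      intro a ha
      have hre : ∀ j : Fin (k + 1), r (a + (j : ℕ)) = t (p + a + (j : ℕ)) := by
        intro j
        have hj : (j : ℕ) ≤ k := Nat.lt_succ_iff.mp j.isLt
        rw [r_eq1 (a + j) (by omega), show p + (a + (j : ℕ)) = p + a + j by ring]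
      constructor
      · intro h
        have h2 := (win_iff (p + a) w).mp (fun j => by rw [← hre j]; exact h j)
        exact ⟨h2.1, fun j => by rw [h2.2 j, hd]⟩
      · rintro ⟨h0, hs'⟩ j
        rw [hre j]
        refine (win_iff (p + a) w).mpr ⟨h0, fun j' => ?_⟩ j
        rw [hs' j', hd]
    have flip_iff : ∀ x y : ZMod 2, x + 1 = y ↔ x = y + 1 := by decide
    have hrwin2 : ∀ a, n ≤ a → a < 2 * n → ((∀ j : Fin (k + 1), r (a + (j : ℕ)) = w j) ↔
        (t (p + 1 + (a - n)) + 1 = w 0 ∧ ∀ j : Fin k, s (p + 1 + (a - n) + (j : ℕ)) = d j)) := by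
      intro a ha1 ha2
      have hre : ∀ j : Fin (k + 1), r (a + (j : ℕ)) = t (p + 1 + (a - n) + (j : ℕ)) + 1 := by
        intro j
        have hj : (j : ℕ) ≤ k := Nat.lt_succ_iff.mp j.isLt
        rw [r_eq2 (a + j) (by omega) (by omega),
          show a + (j : ℕ) - n = (a - n) + j by omega,
          show p + 1 + ((a - n) + (j : ℕ)) = p + 1 + (a - n) + j by ring]
      have hiff1 : (∀ j : Fin (k + 1), r (a + (j : ℕ)) = w j) ↔
          (∀ j : Fin (k + 1), t (p + 1 + (a - n) + (j : ℕ)) = w j + 1) := by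
        constructor
        · intro h j; rw [← flip_iff, ← hre j]; exact h j
        · intro h j; rw [hre j, flip_iff]; exact h j
      rw [hiff1, win_iff (p + 1 + (a - n)) (fun j => w j + 1)]
      constructor
      · rintro ⟨h0, hs'⟩
        refine ⟨by rw [flip_iff]; exact h0, fun j => ?_⟩
        rw [hs' j, hd]; ring
      · rintro ⟨h0, hs'⟩
        refine ⟨by rw [← flip_iff]; exact h0, fun j => ?_⟩
        rw [hs' j, hd]; ring
    have key1 : ∀ y, y < n → (∀ j : Fin (k + 1), r (y + (j : ℕ)) = w j) →
        y = i1 ∧ c = w 0 := by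
      intro y hyn hyw
      obtain ⟨h0, hsw⟩ := (hrwin1 y hyn).mp hyw
      have hu : (p + y) % n = a0 := huniq _ hsw
      have hu1 : (p + i1) % n = a0 := hmodn _ hpi1
      have hyi : y = i1 := cancel_lt hyn hi1n (by rw [hu, hu1])
      subst hyi
      exact ⟨rfl, by rw [← ht1]; exact h0.symm ▸ rfl⟩
    have key2 : ∀ y, n ≤ y → y < 2 * n → (∀ j : Fin (k + 1), r (y + (j : ℕ)) = w j) →
        y = n + m2 ∧ c + 1 = w 0 := by
      intro y hy1 hy2 hyw
      obtain ⟨h0, hsw⟩ := (hrwin2 y hy1 hy2).mp hyw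
      have hu : (p + 1 + (y - n)) % n = a0 := huniq _ hsw
      have hu2 : (p + 1 + m2) % n = a0 := hmodn _ hpm2
      have hym : y - n = m2 := cancel_lt (by omega) hm2n (by rw [hu, hu2])
      constructor
      · omega
      · rw [← ht2, ← hym]; exact h0
    have hone : (1 : ZMod 2) ≠ 0 := by decide
    by_cases hcw : c = w 0
    · refine ⟨i1, ⟨by omega, (hrwin1 i1 hi1n).mpr ⟨by rw [ht1]; exact hcw, hs1⟩⟩, ?_⟩
      rintro y ⟨hy, hyw⟩
      rw [hN] at hy
      by_cases hyn : y < n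
      · exact (key1 y hyn hyw).1
      · exfalso
        have h2 := (key2 y (by omega) (by omega) hyw).2
        rw [← hcw] at h2
        exact hone (by linear_combination h2)
    · have hcw' : c + 1 = w 0 := by
        have h3 : ∀ x y : ZMod 2, x ≠ y → x + 1 = y := by decide
        exact h3 c (w 0) hcw
      refine ⟨n + m2, ⟨by omega, (hrwin2 (n + m2) (by omega) (by omega)).mpr ⟨?_, ?_⟩⟩, ?_⟩
      · rw [show n + m2 - n = m2 by omega, ht2]; exact hcw'
      · rw [show n + m2 - n = m2 by omega]; exact hs2
      · rintro y ⟨hy, hyw⟩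
        rw [hN] at hy
        by_cases hyn : y < n
        · exact absurd (key1 y hyn hyw).2 hcw
        · exact (key2 y (by omega) (by omega) hyw).1
  · rw [hN, two_mul, Finset.sum_range_add]
    have e1 : ∀ j ∈ Finset.range n, r j = t (p + j) := fun j hj =>
      r_eq1 j (by have := Finset.mem_range.mp hj; omega)
    have e2 : ∀ j ∈ Finset.range n, r (n + j) = t (p + 1 + j) + 1 := by
      intro j hj
      have hj' := Finset.mem_range.mp hj
      rw [r_eq2 (n + j) (by omega) (by omega), show n + j - n = j by omega]
    rw [Finset.sum_congr rfl e1, Finset.sum_congr rfl e2, Finset.sum_add_distrib]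
    rw [sum_shift ht_per p, sum_shift ht_per (p + 1)]
    rw [Finset.sum_const, Finset.card_range]
    have hne : (n : ZMod 2) = 0 := by
      rw [hn, show k = (k - 1) + 1 by omega, pow_succ]
      push_cast
      ring_nf
      simp [show (2 : ZMod 2) = 0 from rfl]
    rw [nsmul_eq_mul, hne]
    have h4 : ∀ x : ZMod 2, x + (x + 0 * 1) = 0 := by decide
    exact h4 _

theorem exists_good : ∀ k, 2 ≤ k → ∃ s : ℕ → ZMod 2,
    (∀ i, s (i + 2 ^ k) = s i) ∧
    (∀ w : Fin k → ZMod 2, ∃! a : ℕ, a < 2 ^ k ∧ ∀ j : Fin k, s (a + (j : ℕ)) = w j) ∧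
    ∑ j ∈ Finset.range (2 ^ k), s j = 0 := by
  intro k hk
  induction k, hk using Nat.le_induction with
  | base =>
      refine ⟨fun i => if i % 4 < 2 then 0 else 1, ?_, ?_, ?_⟩
      · intro i; norm_num [Nat.add_mod_right]
      · have hdec : ∀ w : Fin 2 → ZMod 2, ∃! a : Fin 4,
            ∀ j : Fin 2, (if ((a : ℕ) + (j : ℕ)) % 4 < 2 then (0 : ZMod 2) else 1) = w j := by
          decide
        intro w
        obtain ⟨a, haw, hau⟩ := hdec w
        refine ⟨a.val, ⟨by norm_num [a.isLt], fun j => haw j⟩, ?_⟩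
        rintro y ⟨hy, hyw⟩
        have hy4 : y < 4 := by norm_num at hy; exact hy
        have := hau ⟨y, hy4⟩ (fun j => hyw j)
        exact congrArg Fin.val this
      · norm_num [Finset.sum_range_succ]
        decide
  | succ k hk ih =>
      obtain ⟨s, h1, h2, h3⟩ := ih
      exact step (by omega) h1 h2 h3

end DBaux

/-- A binary de Bruijn sequence of order `k` exists: a cyclic sequence of
length `2^k` over `{0,1}` in which every binary string of length `k` occurs
exactly once as a cyclic substring. -/
theorem binary_deBruijn_exists (k : ℕ) :
    ∃ σ : ZMod (2 ^ k) → Fin 2,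
      ∀ w : Fin k → Fin 2,
        ∃! i : ZMod (2 ^ k), ∀ j : Fin k, σ (i + (j : ℕ)) = w j := by
  match k with
  | 0 =>
      haveI : NeZero (2 ^ 0) := ⟨by norm_num⟩
      exact ⟨fun _ => 0, by decide⟩
  | 1 =>
      haveI : NeZero (2 ^ 1) := ⟨by norm_num⟩
      exact ⟨fun i => i, by decide⟩
  | (m + 2) =>
      obtain ⟨s, hper, hdb, -⟩ := DBaux.exists_good (m + 2) (by omega)
      set N := 2 ^ (m + 2) with hNdef
      have hN0 : 0 < N := pow_pos (by norm_num) _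
      haveI : NeZero N := ⟨by omega⟩
      have hs_mod : ∀ x, s x = s (x % N) := by
        intro x
        conv_lhs => rw [← Nat.mod_add_div x N]
        exact DBaux.per_mul hper _ _
      refine ⟨fun i => s i.val, fun w => ?_⟩
      obtain ⟨a, ⟨ha, haw⟩, hau⟩ := hdb w
      have hval : ∀ (i : ZMod N) (j : ℕ), (i + (j : ℕ) : ZMod N).val = (i.val + j) % N := by
        intro i j
        rw [ZMod.val_add, ZMod.val_natCast, Nat.add_mod_mod]
      refine ⟨(a : ZMod N), fun j => ?_, fun y hy => ?_⟩
      · show s ((((a : ℕ) : ZMod N) + ((j : ℕ) : ZMod N)).val) = w j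
        rw [hval, ZMod.val_natCast, Nat.mod_add_mod, ← hs_mod]
        exact haw j
      · have hyv : ∀ j : Fin (m + 2), s (y.val + (j : ℕ)) = w j := by
          intro j
          have h5 := hy j
          rw [show (fun i : ZMod N => s i.val) (y + ((j : ℕ) : ZMod N)) =
            s ((y + ((j : ℕ) : ZMod N)).val) from rfl, hval, ← hs_mod] at h5
          exact h5
        have h6 := hau y.val ⟨ZMod.val_lt y, hyv⟩
        have h2 : ((y.val : ℕ) : ZMod N) = y := ZMod.natCast_rightInverse y
        rw [← h2, h6]
end

section
/- The greedy construction produces a binary de Bruijn sequence: starting from k zeros and repeatedly appending 1 unless this creates a length-k substring already seen (in which case append 0), the resulting sequence of length 2^k, read cyclically, contains every binary string of length k exactly once. -/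
def greedyStep (k : ℕ) (l : List (Fin 2)) : List (Fin 2) :=
  if ¬ ((l ++ [1]).drop (l.length + 1 - k)) <:+: l then l ++ [1]
  else if ¬ ((l ++ [0]).drop (l.length + 1 - k)) <:+: l then l ++ [0]
  else l

def greedySeq (k : ℕ) : List (Fin 2) :=
  (greedyStep k)^[2 ^ k - 1] (List.replicate k 0)

namespace DB

abbrev B := Fin 2

def win (k : ℕ) (S : List B) (p : ℕ) : List B := (S.drop p).take k

lemma length_win {k : ℕ} {S : List B} {p : ℕ} (h : p + k ≤ S.length) :
    (win k S p).length = k := by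
  simp [win, List.length_take, List.length_drop]; omega

lemma win_infix {k : ℕ} (S : List B) (p : ℕ) : win k S p <:+: S :=
  ((List.take_prefix k _).isInfix).trans ((List.drop_suffix p S).isInfix)

lemma infix_iff_win {k : ℕ} {W S : List B} (hW : W.length = k) :
    W <:+: S ↔ ∃ p, p + k ≤ S.length ∧ win k S p = W := by
  constructor
  · rintro ⟨s, t, rfl⟩
    refine ⟨s.length, by simp only [List.length_append, hW]; omega, ?_⟩
    rw [win, List.append_assoc, List.drop_left, ← hW, List.take_left]
  · rintro ⟨p, hp, rfl⟩
    exact win_infix S p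

lemma win_append {k : ℕ} {S : List B} (c : B) {p : ℕ} (h : p + k ≤ S.length) :
    win k (S ++ [c]) p = win k S p := by
  rw [win, List.drop_append_of_le_length (show p ≤ S.length by omega),
    List.take_append_of_le_length (show k ≤ (S.drop p).length by simp [List.length_drop]; omega), win]

lemma drop_append_new {k : ℕ} {S : List B} (c : B) (hk1 : 1 ≤ k) (h : k ≤ S.length) :
    (S ++ [c]).drop (S.length + 1 - k) = S.drop (S.length + 1 - k) ++ [c] :=
  List.drop_append_of_le_length (show S.length + 1 - k ≤ S.length by omega)

lemma win_new {k : ℕ} {S : List B} (c : B) (hk1 : 1 ≤ k) (h : k ≤ S.length) :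
    win k (S ++ [c]) (S.length + 1 - k) = S.drop (S.length + 1 - k) ++ [c] := by
  rw [win, drop_append_new c hk1 h]
  apply List.take_of_length_le
  simp [List.length_drop]; omega

/-- The invariant maintained by the greedy procedure. -/
structure Inv (k : ℕ) (S : List B) : Prop where
  hk : k ≤ S.length
  start : S.take k = List.replicate k 0
  inj : ∀ p q, p + k ≤ S.length → q + k ≤ S.length → win k S p = win k S q → p = q
  pref1 : ∀ p y, 1 ≤ p → p + k ≤ S.length → win k S p = y ++ [(0 : B)] →
      (y ++ [(1 : B)]) <:+: S

lemma inv_init (k : ℕ) : Inv k (List.replicate k 0) where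
  hk := by simp
  start := by simp
  inj := by
    intro p q hp hq _
    simp at hp hq; omega
  pref1 := by
    intro p y hp hpk _
    simp at hpk; omega

end DB

namespace DB

lemma inv_append {k : ℕ} (hk1 : 1 ≤ k) {S : List B} (h : Inv k S) (c : B)
    (hnew : ¬ (S.drop (S.length + 1 - k) ++ [c]) <:+: S)
    (hflip : c = 0 → (S.drop (S.length + 1 - k) ++ [(1:B)]) <:+: S) :
    Inv k (S ++ [c]) := by
  have hk := h.hk
  have hlen : (S ++ [c]).length = S.length + 1 := by simp
  refine ⟨by omega, ?_, ?_, ?_⟩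
  · rw [List.take_append_of_le_length hk]; exact h.start
  · intro p q hp hq heq
    rw [hlen] at hp hq
    rcases Nat.lt_or_ge (p + k) (S.length + 1) with hp' | hp' <;>
      rcases Nat.lt_or_ge (q + k) (S.length + 1) with hq' | hq'
    · rw [win_append c (by omega), win_append c (by omega)] at heq
      exact h.inj p q (by omega) (by omega) heq
    · have hq2 : q = S.length + 1 - k := by omega
      rw [win_append c (show p + k ≤ S.length by omega), hq2, win_new c hk1 hk] at heq
      exact absurd (heq.symm ▸ win_infix S p) hnew
    · have hp2 : p = S.length + 1 - k := by omega
      rw [hp2, win_new c hk1 hk, win_append c (show q + k ≤ S.length by omega)] at heq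
      exact absurd (heq ▸ win_infix S q) hnew
    · omega
  · intro p y hp1 hpk heq
    rw [hlen] at hpk
    rcases Nat.lt_or_ge (p + k) (S.length + 1) with hp' | hp'
    · rw [win_append c (by omega)] at heq
      exact (h.pref1 p y hp1 (by omega) heq).trans (List.prefix_append S [c]).isInfix
    · have hp2 : p = S.length + 1 - k := by omega
      rw [hp2, win_new c hk1 hk] at heq
      obtain ⟨hy, hc⟩ := List.append_inj' heq rfl
      have hc0 : c = 0 := by simpa using hc
      exact (hy ▸ hflip hc0).trans (List.prefix_append S [c]).isInfix

lemma greedyStep_def {k : ℕ} (hk1 : 1 ≤ k) {S : List B} (hk : k ≤ S.length) :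
    greedyStep k S =
      if ¬ (S.drop (S.length + 1 - k) ++ [(1:B)]) <:+: S then S ++ [1]
      else if ¬ (S.drop (S.length + 1 - k) ++ [(0:B)]) <:+: S then S ++ [0]
      else S := by
  unfold greedyStep
  rw [drop_append_new 1 hk1 hk, drop_append_new 0 hk1 hk]

lemma inv_step {k : ℕ} (hk1 : 1 ≤ k) {S : List B} (h : Inv k S) :
    Inv k (greedyStep k S) := by
  have hk := h.hk
  rw [greedyStep_def hk1 hk]
  by_cases hA : (S.drop (S.length + 1 - k) ++ [(1:B)]) <:+: S
  · by_cases hB : (S.drop (S.length + 1 - k) ++ [(0:B)]) <:+: S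
    · simp only [hA, hB, not_true, if_false, if_neg, not_not, ite_self]
      simpa [hA, hB] using h
    · simp only [hA, hB]
      simp only [not_true, not_false_iff, if_false, if_true]
      exact inv_append hk1 h 0 hB (fun _ => hA)
  · simp only [hA, not_false_iff, if_true]
    exact inv_append hk1 h 1 hA (fun hc => absurd hc (by decide))

lemma inv_iterate (k : ℕ) (hk1 : 1 ≤ k) (m : ℕ) :
    Inv k ((greedyStep k)^[m] (List.replicate k 0)) := by
  induction m with
  | zero => exact inv_init k
  | succ m ih => rw [Function.iterate_succ_apply']; exact inv_step hk1 ih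

lemma step_eq_or_length (k : ℕ) (S : List B) :
    greedyStep k S = S ∨ (greedyStep k S).length = S.length + 1 := by
  unfold greedyStep
  split_ifs <;> simp

lemma greedyStep_eq_iff {k : ℕ} (hk1 : 1 ≤ k) {S : List B} (hk : k ≤ S.length) :
    greedyStep k S = S ↔
      ((S.drop (S.length + 1 - k) ++ [(1:B)]) <:+: S ∧
       (S.drop (S.length + 1 - k) ++ [(0:B)]) <:+: S) := by
  rw [greedyStep_def hk1 hk]
  by_cases hA : (S.drop (S.length + 1 - k) ++ [(1:B)]) <:+: S
  · by_cases hB : (S.drop (S.length + 1 - k) ++ [(0:B)]) <:+: S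
    · simp [hA, hB]
    · simp only [hA, hB, not_true, not_false_iff, if_false, if_true, and_false, iff_false]
      intro heq; exact absurd (congrArg List.length heq) (by simp)
  · simp only [hA, not_false_iff, if_true, false_and, iff_false]
    intro heq; exact absurd (congrArg List.length heq) (by simp)

lemma stuck_or_length (k : ℕ) (m : ℕ) (l : List B) :
    greedyStep k ((greedyStep k)^[m] l) = (greedyStep k)^[m] l ∨
      ((greedyStep k)^[m] l).length = l.length + m := by
  induction m with
  | zero => right; rfl
  | succ m ih =>
    rcases ih with h | h
    · left; rw [Function.iterate_succ_apply', h, h]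
    · rw [Function.iterate_succ_apply']
      rcases step_eq_or_length k ((greedyStep k)^[m] l) with h2 | h2
      · left; rw [h2, h2]
      · right; rw [h2, h]; omega

end DB

namespace DB

lemma pigeon2 : ∀ a b c : B, a ≠ b → c = a ∨ c = b := by decide
lemma pigeon3 : ∀ a b c : B, a ≠ b → a ≠ c → b ≠ c → False := by decide

lemma win_pred {k : ℕ} {S : List B} (hk1 : 1 ≤ k) {p : ℕ} (hp1 : 1 ≤ p)
    (hpk : p + k ≤ S.length + 1) :
    win k S (p - 1) = S.getD (p - 1) 0 :: (S.drop p).take (k - 1) := by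
  have hlt : p - 1 < S.length := by omega
  obtain ⟨k', rfl⟩ : ∃ k', k = k' + 1 := ⟨k - 1, by omega⟩
  rw [win, List.drop_eq_getElem_cons hlt, List.getD_eq_getElem _ _ hlt,
    List.take_succ_cons]
  have : p - 1 + 1 = p := by omega
  rw [this]
  simp

lemma occ_of_win {k : ℕ} {S : List B} {y : List B} {c : B} {p : ℕ}
    (hy : y.length = k - 1) (hwin : win k S p = y ++ [c]) :
    (S.drop p).take (k - 1) = y := by
  have h := congrArg (List.take (k - 1)) hwin
  rwa [win, List.take_take, min_eq_left (by omega), List.take_left' hy] at h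

lemma two_occ {k : ℕ} {S : List B} (h : Inv k S) (hk1 : 1 ≤ k) {y : List B}
    (hy : y.length = k - 1) {p q : ℕ} (hpq : p ≠ q) (hp1 : 1 ≤ p) (hq1 : 1 ≤ q)
    (hp : p + k ≤ S.length + 1) (hq : q + k ≤ S.length + 1)
    (hyp : (S.drop p).take (k - 1) = y) (hyq : (S.drop q).take (k - 1) = y) :
    ∀ c : B, (c :: y) <:+: S := by
  have e1 := win_pred hk1 hp1 hp
  have e2 := win_pred hk1 hq1 hq
  rw [hyp] at e1; rw [hyq] at e2
  have hne : win k S (p - 1) ≠ win k S (q - 1) := by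
    intro e
    exact hpq (by have := h.inj (p-1) (q-1) (by omega) (by omega) e; omega)
  have hab : S.getD (p - 1) 0 ≠ S.getD (q - 1) 0 := by
    intro e; exact hne (by rw [e1, e2, e])
  intro c
  rcases pigeon2 _ _ c hab with hcer | hcer
  · rw [hcer, ← e1]; exact win_infix S (p - 1)
  · rw [hcer, ← e2]; exact win_infix S (q - 1)

lemma win_zero {k : ℕ} {S : List B} (h : Inv k S) :
    win k S 0 = List.replicate k 0 := by
  rw [win, List.drop_zero]; exact h.start

/-- At a stuck configuration, the final `k-1` symbols are all zero. -/
lemma s_eq {k : ℕ} {S : List B} (hk1 : 1 ≤ k) (h : Inv k S)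
    (h1 : (S.drop (S.length + 1 - k) ++ [(1:B)]) <:+: S)
    (h0 : (S.drop (S.length + 1 - k) ++ [(0:B)]) <:+: S) :
    S.drop (S.length + 1 - k) = List.replicate (k - 1) (0 : B) := by
  have hk := h.hk
  set n := S.length with hn
  set s := S.drop (n + 1 - k) with hs
  have hslen : s.length = k - 1 := by rw [hs, List.length_drop]; omega
  by_contra hsne
  obtain ⟨p0, hp0, hw0⟩ := (infix_iff_win (k := k) (by simp [hslen]; omega)).1 h0
  obtain ⟨p1, hp1, hw1⟩ := (infix_iff_win (k := k) (by simp [hslen]; omega)).1 h1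
  have hp0pos : 1 ≤ p0 := by
    rcases Nat.eq_zero_or_pos p0 with rfl | hp; swap; · exact hp
    rw [win_zero h] at hw0
    obtain ⟨k', rfl⟩ : ∃ k', k = k' + 1 := ⟨k - 1, by omega⟩
    rw [List.replicate_succ'] at hw0
    obtain ⟨he, -⟩ := List.append_inj' hw0.symm rfl
    exact absurd (by simp only [Nat.add_sub_cancel]; exact he : s = List.replicate (k' + 1 - 1) 0) hsne
  have hp1pos : 1 ≤ p1 := by
    rcases Nat.eq_zero_or_pos p1 with rfl | hp; swap; · exact hp
    rw [win_zero h] at hw1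
    obtain ⟨k', rfl⟩ : ∃ k', k = k' + 1 := ⟨k - 1, by omega⟩
    rw [List.replicate_succ'] at hw1
    obtain ⟨-, he⟩ := List.append_inj' hw1.symm rfl
    simp at he
  have hp01 : p0 ≠ p1 := by
    intro e
    rw [e, hw1] at hw0
    simp at hw0
  have hocc0 : (S.drop p0).take (k - 1) = s := occ_of_win hslen hw0
  have hocc1 : (S.drop p1).take (k - 1) = s := occ_of_win hslen hw1
  have hocc2 : (S.drop (n + 1 - k)).take (k - 1) = s := by
    rw [← hs]; exact List.take_of_length_le (by omega)
  -- three windows at p0-1, p1-1, n-k all equal c :: s, pairwise distinct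
  have e0 := win_pred (S := S) hk1 hp0pos (show p0 + k ≤ S.length + 1 by omega)
  have e1 := win_pred (S := S) hk1 hp1pos (show p1 + k ≤ S.length + 1 by omega)
  have e2 := win_pred (S := S) hk1 (show 1 ≤ n + 1 - k by omega)
    (show (n + 1 - k) + k ≤ S.length + 1 by omega)
  rw [hocc0] at e0; rw [hocc1] at e1; rw [hocc2] at e2
  have key : ∀ a b : ℕ, 1 ≤ a → 1 ≤ b → a ≠ b → a + k ≤ n + 1 → b + k ≤ n + 1 →
      win k S (a - 1) = S.getD (a-1) 0 :: s → win k S (b - 1) = S.getD (b-1) 0 :: s →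
      S.getD (a-1) 0 ≠ S.getD (b-1) 0 := by
    intro a b ha hb hab hak hbk ea eb e
    refine hab ?_
    have := h.inj (a-1) (b-1) (by omega) (by omega) (by rw [ea, eb, e])
    omega
  exact pigeon3 _ _ _
    (key p0 p1 hp0pos hp1pos hp01 (by omega) (by omega) e0 e1)
    (key p0 (n+1-k) hp0pos (by omega) (by omega) (by omega) (by omega) e0 e2)
    (key p1 (n+1-k) hp1pos (by omega) (by omega) (by omega) (by omega) e1 e2)

end DB

namespace DB

/-- Both in-edges of the all-zero vertex are present at a stuck configuration. -/
lemma in_rep0 {k : ℕ} {S : List B} (hk1 : 1 ≤ k) (h : Inv k S)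
    (h1 : (S.drop (S.length + 1 - k) ++ [(1:B)]) <:+: S)
    (h0 : (S.drop (S.length + 1 - k) ++ [(0:B)]) <:+: S) :
    ∀ c : B, (c :: List.replicate (k - 1) (0:B)) <:+: S := by
  have hk := h.hk
  have hs := s_eq hk1 h h1 h0
  rw [hs] at h0 h1
  have hreplen : (List.replicate (k-1) (0:B)).length = k - 1 := by simp
  obtain ⟨p0, hp0, hw0⟩ := (infix_iff_win (k := k) (by simp; omega)).1 h0
  obtain ⟨p1, hp1, hw1⟩ := (infix_iff_win (k := k) (by simp; omega)).1 h1
  have hp01 : p0 ≠ p1 := by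
    intro e; rw [e, hw1] at hw0; simp at hw0
  have hocc0 : (S.drop p0).take (k - 1) = List.replicate (k-1) 0 :=
    occ_of_win hreplen hw0
  have hocc1 : (S.drop p1).take (k - 1) = List.replicate (k-1) 0 :=
    occ_of_win hreplen hw1
  have hocc2 : (S.drop (S.length + 1 - k)).take (k - 1) = List.replicate (k-1) 0 := by
    rw [hs]; exact List.take_of_length_le (by simp)
  have hlastpos : 1 ≤ S.length + 1 - k := by omega
  rcases Nat.eq_zero_or_pos p0 with rfl | hp0pos
  · -- use p1 and the terminal occurrence
    have hne : p1 ≠ S.length + 1 - k := by omega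
    have hp1pos : 1 ≤ p1 := by omega
    exact two_occ h hk1 hreplen hne hp1pos hlastpos (by omega) (by omega) hocc1 hocc2
  · rcases Nat.eq_zero_or_pos p1 with rfl | hp1pos
    · have hne : p0 ≠ S.length + 1 - k := by omega
      exact two_occ h hk1 hreplen hne hp0pos hlastpos (by omega) (by omega) hocc0 hocc2
    · exact two_occ h hk1 hreplen hp01 hp0pos hp1pos (by omega) (by omega) hocc0 hocc1

/-- If `y ++ [0]` is present and `y` is not all-zero, then both in-edges of `y`
are present. -/
lemma in_all {k : ℕ} {S : List B} (hk1 : 1 ≤ k) (h : Inv k S) {y : List B}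
    (hy : y.length = k - 1) (hyne : y ≠ List.replicate (k - 1) 0)
    (h0 : (y ++ [(0:B)]) <:+: S) : ∀ c : B, (c :: y) <:+: S := by
  have hk := h.hk
  obtain ⟨p, hp, hwp⟩ := (infix_iff_win (k := k) (by simp [hy]; omega)).1 h0
  have hppos : 1 ≤ p := by
    rcases Nat.eq_zero_or_pos p with rfl | hpp; swap; · exact hpp
    rw [win_zero h] at hwp
    obtain ⟨k', rfl⟩ : ∃ k', k = k' + 1 := ⟨k - 1, by omega⟩
    rw [List.replicate_succ'] at hwp
    obtain ⟨he, -⟩ := List.append_inj' hwp rfl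
    exact absurd (by simp only [Nat.add_sub_cancel]; exact he.symm :
      y = List.replicate (k' + 1 - 1) 0) hyne
  have h1 : (y ++ [(1:B)]) <:+: S := h.pref1 p y hppos hp hwp
  obtain ⟨q, hq, hwq⟩ := (infix_iff_win (k := k) (by simp [hy]; omega)).1 h1
  have hqpos : 1 ≤ q := by
    rcases Nat.eq_zero_or_pos q with rfl | hqq; swap; · exact hqq
    rw [win_zero h] at hwq
    obtain ⟨k', rfl⟩ : ∃ k', k = k' + 1 := ⟨k - 1, by omega⟩
    rw [List.replicate_succ'] at hwq
    obtain ⟨-, he⟩ := List.append_inj' hwq rfl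
    simp at he
  have hpq : p ≠ q := by
    intro e; rw [e, hwq] at hwp; simp at hwp
  exact two_occ h hk1 hy hpq hppos hqpos (by omega) (by omega)
    (occ_of_win hy hwp) (occ_of_win hy hwq)

/-- The chase: every vertex with `k-1-t` trailing zeros has all in-edges present. -/
lemma chase {k : ℕ} {S : List B} (hk1 : 1 ≤ k) (h : Inv k S)
    (h1 : (S.drop (S.length + 1 - k) ++ [(1:B)]) <:+: S)
    (h0 : (S.drop (S.length + 1 - k) ++ [(0:B)]) <:+: S) :
    ∀ t : ℕ, ∀ y : List B, y.length = k - 1 →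
      y.drop t = List.replicate (k - 1 - t) (0:B) → ∀ c : B, (c :: y) <:+: S := by
  intro t
  induction t with
  | zero =>
    intro y hy hdrop c
    rw [List.drop_zero] at hdrop
    simp only [Nat.sub_zero] at hdrop
    rw [hdrop]
    exact in_rep0 hk1 h h1 h0 c
  | succ t ih =>
    intro y hy hdrop c
    by_cases hcase : k - 1 ≤ t
    · refine ih y hy ?_ c
      rw [List.drop_eq_nil_of_le (by omega), show k - 1 - t = 0 by omega]
      rfl
    · by_contra hc
      have hyne : y ≠ List.replicate (k - 1) 0 := by
        intro e; exact hc (e ▸ in_rep0 hk1 h h1 h0 c)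
      have hmiss : ¬ (y ++ [(0:B)]) <:+: S := fun hpres =>
        hc (in_all hk1 h hy hyne hpres c)
      obtain ⟨a, y', rfl⟩ : ∃ a y', y = a :: y' := by
        cases y with
        | nil => exfalso; simp at hy; omega
        | cons a y' => exact ⟨a, y', rfl⟩
      refine hmiss ?_
      have hstep := ih (y' ++ [0]) (by simp at hy ⊢; omega) ?_ a
      · simpa using hstep
      · rw [List.drop_append_of_le_length (by simp at hy ⊢; omega)]
        have : (a :: y').drop (t + 1) = y'.drop t := List.drop_succ_cons
        rw [this] at hdrop
        rw [hdrop, show k - 1 - t = (k - 1 - (t+1)) + 1 by omega,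
          List.replicate_succ']

/-- Every word of length `k` is present at a stuck configuration. -/
lemma all_present {k : ℕ} {S : List B} (hk1 : 1 ≤ k) (h : Inv k S)
    (h1 : (S.drop (S.length + 1 - k) ++ [(1:B)]) <:+: S)
    (h0 : (S.drop (S.length + 1 - k) ++ [(0:B)]) <:+: S) :
    ∀ W : List B, W.length = k → W <:+: S := by
  intro W hW
  obtain ⟨c, y, rfl⟩ : ∃ c y, W = c :: y := by
    cases W with
    | nil => exfalso; simp at hW; omega
    | cons c y => exact ⟨c, y, rfl⟩
  exact chase hk1 h h1 h0 (k - 1) y (by simp at hW; omega)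
    (by rw [List.drop_eq_nil_of_le (by simp at hW; omega)]; simp) c

end DB

namespace DB

def gmap (k : ℕ) (S : List B) (p : Fin (S.length + 1 - k)) : Fin k → B :=
  fun j => S.getD ((p : ℕ) + j) 0

lemma getElem_win {k : ℕ} {S : List B} {p j : ℕ} (hp : p + k ≤ S.length)
    (hj : j < k) :
    (win k S p)[j]'(by rw [length_win hp]; exact hj) =
      S[p + j]'(by omega) := by
  simp [win, List.getElem_take, List.getElem_drop]

lemma gmap_eq_getD {k : ℕ} {S : List B} (hk : k ≤ S.length)
    (p : Fin (S.length + 1 - k)) (j : Fin k) :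
    gmap k S p j = S[(p : ℕ) + (j : ℕ)]'(by omega) := by
  have hpj : (p : ℕ) + (j : ℕ) < S.length := by omega
  rw [gmap, List.getD_eq_getElem _ _ hpj]

lemma gmap_eq_iff {k : ℕ} {S : List B} (hk : k ≤ S.length)
    (p : Fin (S.length + 1 - k)) (w : Fin k → B) :
    gmap k S p = w ↔ win k S (p : ℕ) = List.ofFn w := by
  have hp : (p : ℕ) + k ≤ S.length := by omega
  constructor
  · intro he
    refine List.ext_getElem (by rw [length_win hp]; simp) ?_
    intro j h1 h2
    have hj : j < k := by rwa [length_win hp] at h1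
    rw [getElem_win hp hj, List.getElem_ofFn]
    rw [← gmap_eq_getD hk p ⟨j, hj⟩, he]
  · intro he
    funext j
    have h1 := List.getElem_of_eq he
      (show (j:ℕ) < (win k S (p:ℕ)).length by rw [length_win hp]; exact j.2)
    rw [getElem_win hp j.2, List.getElem_ofFn] at h1
    rw [gmap_eq_getD hk p j, h1]

lemma gmap_injective {k : ℕ} {S : List B} (h : Inv k S) :
    Function.Injective (gmap k S) := by
  intro p q he
  have hk := h.hk
  have hwin : win k S (p : ℕ) = win k S (q : ℕ) := by
    rw [(gmap_eq_iff hk p (gmap k S q)).1 he,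
      (gmap_eq_iff hk q (gmap k S q)).1 rfl]
  exact Fin.ext (h.inj _ _ (by omega) (by omega) hwin)

lemma length_le {k : ℕ} {S : List B} (h : Inv k S) :
    S.length + 1 - k ≤ 2 ^ k := by
  have := Fintype.card_le_of_injective _ (gmap_injective h)
  simpa [Fintype.card_fun] using this

lemma gmap_surjective_of_all_present {k : ℕ} {S : List B} (h : Inv k S)
    (hall : ∀ W : List B, W.length = k → W <:+: S) :
    Function.Surjective (gmap k S) := by
  intro w
  obtain ⟨p, hp, hwp⟩ :=
    (infix_iff_win (k := k) (List.length_ofFn (f := w))).1 (hall _ (List.length_ofFn (f := w)))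
  refine ⟨⟨p, by omega⟩, ?_⟩
  rw [gmap_eq_iff h.hk]
  exact hwp

lemma all_present_of_length {k : ℕ} {S : List B} (hk1 : 1 ≤ k) (h : Inv k S)
    (hlen : S.length = 2 ^ k + k - 1) :
    ∀ W : List B, W.length = k → W <:+: S := by
  have hcard : Fintype.card (Fin (S.length + 1 - k)) = Fintype.card (Fin k → B) := by
    have h2 : 1 ≤ 2 ^ k := Nat.one_le_two_pow
    simp [Fintype.card_fun]
    omega
  have hbij : Function.Bijective (gmap k S) :=
    (Fintype.bijective_iff_injective_and_card _).2 ⟨gmap_injective h, hcard⟩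
  intro W hW
  obtain ⟨p, hp⟩ := hbij.2 (fun j => W.getD (j : ℕ) 0)
  have hwin : win k S (p : ℕ) = W := by
    rw [(gmap_eq_iff h.hk p _).1 hp]
    refine List.ext_getElem (by simp [hW]) ?_
    intro j h1 h2
    rw [List.getElem_ofFn]
    exact List.getD_eq_getElem W 0 h2
  rw [← hwin]
  exact win_infix S (p : ℕ)

/-- The greedy sequence is stuck. -/
lemma greedySeq_stuck (k : ℕ) (hk1 : 1 ≤ k) :
    greedyStep k (greedySeq k) = greedySeq k := by
  have hinv : Inv k (greedySeq k) := inv_iterate k hk1 (2 ^ k - 1)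
  rcases stuck_or_length k (2 ^ k - 1) (List.replicate k 0) with h | h
  · exact h
  · have hlen : (greedySeq k).length = 2 ^ k + k - 1 := by
      have h2 : 1 ≤ 2 ^ k := Nat.one_le_two_pow
      have h3 : (greedySeq k).length = (List.replicate k (0:B)).length + (2^k - 1) := h
      simp only [List.length_replicate] at h3; omega
    have hall := all_present_of_length hk1 hinv hlen
    rw [greedyStep_eq_iff hk1 hinv.hk]
    have hdlen : ((greedySeq k).drop ((greedySeq k).length + 1 - k)).length = k - 1 := by
      rw [List.length_drop]; have := hinv.hk; omega
    constructor <;> [exact hall _ (by simp [hdlen]; omega);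
      exact hall _ (by simp [hdlen]; omega)]

/-- Full description of the stuck greedy sequence. -/
lemma stuck_complete {k : ℕ} {S : List B} (hk1 : 1 ≤ k) (h : Inv k S)
    (hstuck : greedyStep k S = S) :
    S.length = 2 ^ k + k - 1 ∧
    (∀ W : List B, W.length = k → ∃! p, p + k ≤ S.length ∧ win k S p = W) ∧
    S.drop (S.length + 1 - k) = List.replicate (k - 1) (0:B) := by
  obtain ⟨h1, h0⟩ := (greedyStep_eq_iff hk1 h.hk).1 hstuck
  have hall := all_present hk1 h h1 h0
  have hle := length_le h
  have hge : 2 ^ k ≤ S.length + 1 - k := by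
    have hcs := Fintype.card_le_of_surjective _ (gmap_surjective_of_all_present h hall)
    simpa [Fintype.card_fun] using hcs
  have hk := h.hk
  refine ⟨by omega, ?_, s_eq hk1 h h1 h0⟩
  intro W hW
  obtain ⟨p, hp, hwp⟩ := (infix_iff_win (k := k) hW).1 (hall W hW)
  exact ⟨p, ⟨hp, hwp⟩, fun q ⟨hq, hwq⟩ => h.inj q p hq hp (by rw [hwp, hwq])⟩

end DB

namespace DB

lemma zero_head {k : ℕ} {S : List B} (hstart : S.take k = List.replicate k (0:B))
    {t : ℕ} (ht : t < k) (htS : t < S.length) : S[t] = 0 := by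
  have h1 : (S.take k)[t]'(by simp [List.length_take]; omega) = S[t] :=
    List.getElem_take
  rw [← h1]
  simp [hstart]

lemma zero_tail {k : ℕ} {S : List B} (hk1 : 1 ≤ k)
    (hlen : S.length = 2 ^ k + k - 1)
    (hlast : S.drop (S.length + 1 - k) = List.replicate (k-1) (0:B))
    {u : ℕ} (hu1 : 2 ^ k ≤ u) (hu2 : u < S.length) : S[u] = 0 := by
  have h2 : 1 ≤ 2 ^ k := Nat.one_le_two_pow
  have hnk : S.length + 1 - k = 2 ^ k := by omega
  have ht : u - 2 ^ k < (S.drop (S.length + 1 - k)).length := by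
    rw [List.length_drop]; omega
  have h1 : (S.drop (S.length + 1 - k))[u - 2 ^ k]'ht = S[u] := by
    rw [List.getElem_drop]
    congr 1
    omega
  rw [← h1]
  simp [hlast]

lemma cyclic_getD {k : ℕ} (hk1 : 1 ≤ k) {S : List B}
    (hlen : S.length = 2 ^ k + k - 1)
    (hstart : S.take k = List.replicate k (0:B))
    (hlast : S.drop (S.length + 1 - k) = List.replicate (k-1) (0:B))
    {p j : ℕ} (hp : p < 2 ^ k) (hj : j < k) :
    S.getD ((p + j) % 2 ^ k) 0 = S[p + j]'(by omega) := by
  have hklt : k < 2 ^ k := Nat.lt_two_pow_self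
  rcases Nat.lt_or_ge (p + j) (2 ^ k) with hlt | hge
  · rw [Nat.mod_eq_of_lt hlt, List.getD_eq_getElem _ _ (by omega)]
  · have hmod : (p + j) % 2 ^ k = p + j - 2 ^ k := by
      rw [Nat.mod_eq_sub_mod hge, Nat.mod_eq_of_lt (by omega)]
    rw [hmod, List.getD_eq_getElem _ _ (show p + j - 2^k < S.length by omega)]
    rw [zero_head hstart (show p + j - 2^k < k by omega),
      zero_tail hk1 hlen hlast hge (by omega)]

end DB

open DB in
/-- The greedy construction produces a binary de Bruijn sequence: the first
`2^k` symbols of the greedy sequence, read cyclically, contain every binary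
string of length `k` exactly once as a cyclic substring. -/
theorem greedy_deBruijn (k : ℕ) (hk : 1 ≤ k) :
    ∀ w : Fin k → Fin 2,
      ∃! i : ZMod (2 ^ k),
        ∀ j : Fin k, (greedySeq k).getD ((i + (j : ℕ)).val) 0 = w j := by
  intro w
  haveI : NeZero (2 ^ k) := ⟨by positivity⟩
  have hk1 := hk
  have hinv : Inv k (greedySeq k) := inv_iterate k hk1 (2 ^ k - 1)
  obtain ⟨hlen, huniq, hlast⟩ := stuck_complete hk1 hinv (greedySeq_stuck k hk1)
  set S := greedySeq k with hS
  have hstart := hinv.start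
  have h2 : 1 ≤ 2 ^ k := Nat.one_le_two_pow
  have hklt : k < 2 ^ k := Nat.lt_two_pow_self
  have hW : (List.ofFn w).length = k := List.length_ofFn (f := w)
  obtain ⟨p, ⟨hp, hwp⟩, hpu⟩ := huniq (List.ofFn w) hW
  have hplt : p < 2 ^ k := by omega
  -- values at positions: for any q < 2^k, j : Fin k,
  have hval : ∀ (q : ℕ), q < 2 ^ k → ∀ j : Fin k,
      (((q : ZMod (2 ^ k)) + ((j : ℕ) : ZMod (2 ^ k))).val) = (q + (j : ℕ)) % 2 ^ k := by
    intro q hq j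
    rw [← Nat.cast_add, ZMod.val_natCast]
  refine ⟨(p : ZMod (2 ^ k)), ?_, ?_⟩
  · intro j
    rw [hval p hplt j,
      cyclic_getD hk1 hlen hstart hlast hplt j.2]
    have h3 := List.getElem_of_eq hwp
      (show (j:ℕ) < (win k S p).length by rw [length_win hp]; exact j.2)
    rw [getElem_win hp j.2, List.getElem_ofFn] at h3
    simpa using h3
  · intro i' hi'
    set q := i'.val with hq
    have hqlt : q < 2 ^ k := ZMod.val_lt i'
    have hicast : ((q : ℕ) : ZMod (2 ^ k)) = i' := ZMod.natCast_rightInverse i'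
    have hwq : win k S q = List.ofFn w := by
      refine List.ext_getElem (by rw [length_win (by omega), hW]) ?_
      intro j hj1 hj2
      have hjk : j < k := by rwa [length_win (by omega)] at hj1
      rw [getElem_win (by omega) hjk, List.getElem_ofFn]
      have hji := hi' ⟨j, hjk⟩
      rw [← hicast, hval q hqlt ⟨j, hjk⟩,
        cyclic_getD hk1 hlen hstart hlast hqlt hjk] at hji
      exact hji
    have hqp : q = p := hpu q ⟨by omega, hwq⟩
    rw [← hicast, hqp]
end

section
/- For any finite alphabet A with |A| = n ≥ 2 and any k ≥ 1, there exists a de Bruijn sequence of order k over A, i.e., a cyclic sequence of length n^k in which every string in A^k occurs exactly once as a cyclic substring. -/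
set_option linter.unusedSectionVars false

open List

section Euler

variable {E V : Type} [DecidableEq E] [DecidableEq V] (s t : E → V)

/-- `Wk s t a l b` : the list of edges `l` forms a walk from `a` to `b`. -/
def Wk : V → List E → V → Prop
  | a, [], b => a = b
  | a, e :: l, b => s e = a ∧ Wk (t e) l b

lemma wk_append {a c : V} {l₁ l₂ : List E} :
    Wk s t a (l₁ ++ l₂) c ↔ ∃ b, Wk s t a l₁ b ∧ Wk s t b l₂ c := by
  induction l₁ generalizing a with
  | nil => simp [Wk]
  | cons e l ih => simp [Wk, ih, and_assoc]

/-- count of edges in `l` whose `f`-endpoint is `x`. -/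
def cnt (f : E → V) (x : V) (l : List E) : ℕ := l.countP (fun e => decide (f e = x))

lemma cnt_nil (f : E → V) (x : V) : cnt f x ([] : List E) = 0 := rfl

lemma cnt_cons (f : E → V) (x : V) (e : E) (l : List E) :
    cnt f x (e :: l) = cnt f x l + if f e = x then 1 else 0 := by
  simp [cnt, List.countP_cons]

lemma cnt_append (f : E → V) (x : V) (l₁ l₂ : List E) :
    cnt f x (l₁ ++ l₂) = cnt f x l₁ + cnt f x l₂ := by
  simp [cnt, List.countP_append]

lemma wk_count {a b : V} {l : List E} (h : Wk s t a l b) (x : V) :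
    cnt s x l + (if x = b then 1 else 0) = cnt t x l + (if x = a then 1 else 0) := by
  induction l generalizing a with
  | nil => cases h; rfl
  | cons e l ih =>
      obtain ⟨hse, hw⟩ := h
      have hx := ih hw
      rw [cnt_cons, cnt_cons, ← hse]
      have h1 : (if s e = x then 1 else 0) = (if x = s e then 1 else 0) := by
        simp [eq_comm]
      have h2 : (if t e = x then 1 else 0) = (if x = t e then 1 else 0) := by
        simp [eq_comm]
      rw [h1, h2]
      omega


lemma wk_head {a b : V} {l : List E} (h : Wk s t a l b) (hl : 0 < l.length) :
    s (l.get ⟨0, hl⟩) = a := by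
  cases l with
  | nil => simp at hl
  | cons e l => exact h.1

lemma wk_get {a b : V} {l : List E} (h : Wk s t a l b) :
    ∀ (j : ℕ) (hj : j + 1 < l.length),
      t (l.get ⟨j, by omega⟩) = s (l.get ⟨j + 1, hj⟩) := by
  induction l generalizing a with
  | nil => intro j hj; simp at hj
  | cons e l ih =>
      intro j hj
      match j with
      | 0 =>
        have h0 : 0 < l.length := by simp at hj; omega
        have := wk_head s t h.2 h0
        simpa using this.symm
      | Nat.succ r =>
        have hr : r + 1 < l.length := by simp at hj; omega
        have := ih h.2 r hr
        simpa using this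

lemma wk_getlast {a b : V} {l : List E} (h : Wk s t a l b) (hl : 0 < l.length) :
    t (l.get ⟨l.length - 1, by omega⟩) = b := by
  induction l generalizing a with
  | nil => simp at hl
  | cons e l ih =>
      cases l with
      | nil => exact h.2
      | cons f l' =>
        have := ih h.2 (by simp)
        simpa using this

lemma extend : ∀ (N : ℕ) (R : List E), R.length ≤ N → R.Nodup →
    ∀ w v : V,
    (∀ x, cnt s x R + (if x = v then 1 else 0) = cnt t x R + (if x = w then 1 else 0)) →
    ∃ l : List E, l.Nodup ∧ (∀ e ∈ l, e ∈ R) ∧ Wk s t w l v := by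
  intro N
  induction N with
  | zero =>
      intro R hR _ w v hbal
      have hRnil : R = [] := List.eq_nil_of_length_eq_zero (by omega)
      subst hRnil
      have hv := hbal v
      simp [cnt_nil] at hv
      refine ⟨[], List.nodup_nil, by simp, ?_⟩
      show Wk s t w [] v
      have : w = v := by
        by_cases h : v = w
        · exact h.symm
        · simp [h] at hv
      simpa [Wk] using this
  | succ N ih =>
      intro R hR hnd w v hbal
      by_cases hex : ∃ e ∈ R, s e = w
      · obtain ⟨e, heR, hse⟩ := hex
        have hperm : R ~ e :: R.erase e := List.perm_cons_erase heR
        have hcnt : ∀ (f : E → V) x, cnt f x R = cnt f x (R.erase e) + (if f e = x then 1 else 0) := by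
          intro f x
          have := hperm.countP_eq (fun e' => decide (f e' = x))
          simpa [cnt, List.countP_cons] using this
        have hlpos : 0 < R.length := List.length_pos_of_mem heR
        have hlen : (R.erase e).length ≤ N := by
          have := List.length_erase_of_mem heR
          omega
        have hnd' : (R.erase e).Nodup := hnd.erase e
        have hbal' : ∀ x, cnt s x (R.erase e) + (if x = v then 1 else 0)
            = cnt t x (R.erase e) + (if x = t e then 1 else 0) := by
          intro x
          have h0 := hbal x
          rw [hcnt s x, hcnt t x] at h0
          have h1 : (if s e = x then 1 else 0) = (if x = w then 1 else 0) := by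
            rw [hse]; simp [eq_comm]
          have h2 : (if t e = x then 1 else 0) = (if x = t e then 1 else 0) := by
            simp [eq_comm]
          rw [h1, h2] at h0
          omega
        obtain ⟨l, hlnd, hlsub, hlw⟩ := ih (R.erase e) hlen hnd' (t e) v hbal'
        refine ⟨e :: l, ?_, ?_, hse, hlw⟩
        · exact List.nodup_cons.mpr
            ⟨fun hc => ((List.Nodup.mem_erase_iff hnd).mp (hlsub e hc)).1 rfl, hlnd⟩
        · intro f hf
          rcases List.mem_cons.mp hf with hf | hf
          · exact hf ▸ heR
          · have hsub : R.erase e ⊆ R := List.erase_subset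
            exact hsub (hlsub f hf)
      · have hz : cnt s w R = 0 := by
          rw [cnt, List.countP_eq_zero]
          intro e he
          simpa using fun hc => hex ⟨e, he, hc⟩
        have hw := hbal w
        rw [hz, if_pos rfl] at hw
        have hwv : w = v := by
          by_cases h : w = v
          · exact h
          · rw [if_neg h] at hw; omega
        refine ⟨[], List.nodup_nil, by simp, ?_⟩
        show Wk s t w [] v
        simpa [Wk] using hwv


lemma closed_cons (R : List E) (hnd : R.Nodup) (hbal : ∀ x, cnt s x R = cnt t x R)
    (e₀ : E) (he₀ : e₀ ∈ R) :
    ∃ l, l.Nodup ∧ (∀ e ∈ l, e ∈ R) ∧ Wk s t (s e₀) l (s e₀) ∧ l ≠ [] := by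
  have hperm : R ~ e₀ :: R.erase e₀ := List.perm_cons_erase he₀
  have hcnt : ∀ (f : E → V) x,
      cnt f x R = cnt f x (R.erase e₀) + (if f e₀ = x then 1 else 0) := by
    intro f x
    have := hperm.countP_eq (fun e' => decide (f e' = x))
    simpa [cnt, List.countP_cons] using this
  have hbal' : ∀ x, cnt s x (R.erase e₀) + (if x = s e₀ then 1 else 0)
      = cnt t x (R.erase e₀) + (if x = t e₀ then 1 else 0) := by
    intro x
    have h0 := hbal x
    rw [hcnt s x, hcnt t x] at h0
    have h1 : (if s e₀ = x then 1 else 0) = (if x = s e₀ then 1 else 0) := by simp [eq_comm]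
    have h2 : (if t e₀ = x then 1 else 0) = (if x = t e₀ then 1 else 0) := by simp [eq_comm]
    rw [h1, h2] at h0
    omega
  obtain ⟨l, hlnd, hlsub, hlw⟩ :=
    extend s t (R.erase e₀).length (R.erase e₀) le_rfl (hnd.erase _) (t e₀) (s e₀) hbal'
  have hesub : R.erase e₀ ⊆ R := List.erase_subset
  refine ⟨e₀ :: l, ?_, ?_, ⟨rfl, hlw⟩, by simp⟩
  · exact List.nodup_cons.mpr
      ⟨fun hc => ((List.Nodup.mem_erase_iff hnd).mp (hlsub e₀ hc)).1 rfl, hlnd⟩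
  · intro f hf
    rcases List.mem_cons.mp hf with hf | hf
    · exact hf ▸ he₀
    · exact hesub (hlsub f hf)

theorem euler_exists [Fintype E]
    (hbal : ∀ x, cnt s x (Finset.univ : Finset E).toList
      = cnt t x (Finset.univ : Finset E).toList)
    (hconn : ∀ u v : V,
      Relation.ReflTransGen (fun a b => ∃ e : E, s e = a ∧ t e = b) u v)
    (hne : Nonempty E) :
    ∃ (v₀ : V) (L : List E), L.Nodup ∧ (∀ e : E, e ∈ L) ∧ Wk s t v₀ L v₀ := by
  obtain ⟨e⟩ := hne
  suffices aux : ∀ (d : ℕ) (v₀ : V) (L : List E), L.Nodup → Wk s t v₀ L v₀ →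
      Fintype.card E - L.length ≤ d →
      ∃ (v₁ : V) (M : List E), M.Nodup ∧ (∀ e : E, e ∈ M) ∧ Wk s t v₁ M v₁ by
    exact aux (Fintype.card E) (s e) [] List.nodup_nil rfl (by omega)
  intro d
  induction d with
  | zero =>
      intro v₀ L hnd hwL hcard
      refine ⟨v₀, L, hnd, ?_, hwL⟩
      intro f
      by_contra hf
      have h1 : L.toFinset.card = L.length := List.toFinset_card_of_nodup hnd
      have h2 : L.toFinset ⊂ Finset.univ := by
        refine Finset.ssubset_univ_iff.mpr fun hc => hf ?_
        have : f ∈ L.toFinset := by rw [hc]; exact Finset.mem_univ f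
        simpa using this
      have := Finset.card_lt_card h2
      rw [Finset.card_univ] at this
      omega
  | succ d ih =>
      intro v₀ L hnd hwL hcard
      by_cases hall : ∀ f : E, f ∈ L
      · exact ⟨v₀, L, hnd, hall, hwL⟩
      push_neg at hall
      obtain ⟨f₁, hf₁⟩ := hall
      -- remaining edges
      set R : List E := (Finset.univ : Finset E).toList.filter (fun e => decide (e ∉ L)) with hR
      have hmemR : ∀ f : E, f ∈ R ↔ f ∉ L := by
        intro f
        simp [hR, List.mem_filter]
      have hRnd : R.Nodup := (Finset.nodup_toList _).filter _
      have hdisj : List.Disjoint R L := fun a haR haL => ((hmemR a).mp haR) haL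
      have hndRL : (R ++ L).Nodup := List.Nodup.append hRnd hnd hdisj
      have hperm : (Finset.univ : Finset E).toList ~ R ++ L := by
        rw [List.perm_ext_iff_of_nodup (Finset.nodup_toList _) hndRL]
        intro a
        simp only [List.mem_append, hmemR a, Finset.mem_toList, Finset.mem_univ, true_iff]
        tauto
      have hsplit : ∀ (f : E → V) x,
          cnt f x (Finset.univ : Finset E).toList = cnt f x R + cnt f x L := by
        intro f x
        have := hperm.countP_eq (fun e' => decide (f e' = x))
        simpa [cnt, cnt_append] using this
      have hclosedL : ∀ x, cnt s x L = cnt t x L := by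
        intro x
        have := wk_count s t hwL x
        omega
      have hRbal : ∀ x, cnt s x R = cnt t x R := by
        intro x
        have h0 := hbal x
        rw [hsplit s x, hsplit t x] at h0
        have := hclosedL x
        omega
      by_cases hLnil : L = []
      · subst hLnil
        obtain ⟨l, hlnd, hlsub, hlw, hlne⟩ :=
          closed_cons s t R hRnd hRbal f₁ ((hmemR f₁).mpr hf₁)
        have hlpos : 0 < l.length := List.length_pos_iff.mpr hlne
        exact ih (s f₁) l hlnd hlw (by simp at hcard; omega)
      · -- find an anchor vertex on L with an unused out-edge
        have hLpos : 0 < L.length := List.length_pos_iff.mpr hLnil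
        have hv₀ : ∃ g ∈ L, s g = v₀ ∨ t g = v₀ := by
          cases L with
          | nil => exact absurd rfl hLnil
          | cons g l => exact ⟨g, List.mem_cons_self, Or.inl hwL.1⟩
        have anchor : ∃ e₀, e₀ ∈ R ∧ ∃ g ∈ L, s g = s e₀ ∨ t g = s e₀ := by
          have key : ∀ x, Relation.ReflTransGen (fun a b => ∃ e : E, s e = a ∧ t e = b) x (s f₁) →
              (∃ g ∈ L, s g = x ∨ t g = x) →
              ∃ e₀, e₀ ∈ R ∧ ∃ g ∈ L, s g = s e₀ ∨ t g = s e₀ := by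
            intro x hx
            induction hx using Relation.ReflTransGen.head_induction_on with
            | refl => exact fun hP => ⟨f₁, (hmemR f₁).mpr hf₁, hP⟩
            | head hstep hr ihh =>
                intro hP
                obtain ⟨g, hgs, hgt⟩ := hstep
                by_cases hgL : g ∈ L
                · exact ihh ⟨g, hgL, Or.inr hgt⟩
                · exact ⟨g, (hmemR g).mpr hgL, hgs ▸ hP⟩
          exact key v₀ (hconn v₀ (s f₁)) hv₀
        obtain ⟨e₀, he₀R, g, hgL, hg⟩ := anchor
        -- rotate L to start and end at u := s e₀
        obtain ⟨L₁, L₂, rfl⟩ := List.append_of_mem hgL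
        obtain ⟨b, h₁, h₂⟩ := (wk_append s t).mp hwL
        obtain ⟨hsg, h₂'⟩ := h₂
        have hrot : ∃ rotated : List E, (rotated ~ L₁ ++ g :: L₂) ∧
            Wk s t (s e₀) rotated (s e₀) := by
          rcases hg with hg | hg
          · refine ⟨(g :: L₂) ++ L₁, List.perm_append_comm, ?_⟩
            rw [wk_append]
            have hb : b = s e₀ := by rw [← hsg, hg]
            exact ⟨v₀, ⟨hg, h₂'⟩, hb ▸ h₁⟩
          · refine ⟨L₂ ++ (L₁ ++ [g]), ?_, ?_⟩
            · calc L₂ ++ (L₁ ++ [g]) ~ (L₁ ++ [g]) ++ L₂ := List.perm_append_comm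
                _ = L₁ ++ g :: L₂ := by simp
            · rw [wk_append]
              refine ⟨v₀, by rw [← hg]; exact h₂', ?_⟩
              rw [wk_append]
              exact ⟨b, h₁, hsg, hg⟩
        obtain ⟨rot, hrotperm, hrotw⟩ := hrot
        obtain ⟨l, hlnd, hlsub, hlw, hlne⟩ :=
          closed_cons s t R hRnd hRbal e₀ he₀R
        have hrotnd : rot.Nodup := hrotperm.nodup_iff.mpr hnd
        have hMnd : (l ++ rot).Nodup := by
          refine List.Nodup.append hlnd hrotnd ?_
          intro a hal har
          exact ((hmemR a).mp (hlsub a hal)) (hrotperm.mem_iff.mp har)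
        have hMw : Wk s t (s e₀) (l ++ rot) (s e₀) := by
          rw [wk_append]; exact ⟨s e₀, hlw, hrotw⟩
        have hlpos : 0 < l.length := List.length_pos_iff.mpr hlne
        refine ih (s e₀) (l ++ rot) hMnd hMw ?_
        have : rot.length = (L₁ ++ g :: L₂).length := hrotperm.length_eq
        simp only [List.length_append] at *
        omega


lemma cnt_univ {E V : Type} [DecidableEq V] [DecidableEq E] [Fintype E] (f : E → V) (x : V) :
    cnt f x (Finset.univ : Finset E).toList = Fintype.card {e : E // f e = x} := by
  have h1 : cnt f x (Finset.univ : Finset E).toList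
      = Multiset.countP (fun e => f e = x) (Finset.univ : Finset E).val := by
    rw [cnt, ← Multiset.coe_countP, Finset.coe_toList]
  rw [h1, Multiset.countP_eq_card_filter, Fintype.card_subtype]
  rfl

end Euler

section DeBruijnGraph

variable {A : Type} [Fintype A] [DecidableEq A]

lemma card_init_fiber (m : ℕ) (x : Fin m → A) :
    Fintype.card {e : Fin (m+1) → A // Fin.init e = x} = Fintype.card A := by
  refine Fintype.card_congr ⟨fun e => e.1 (Fin.last m),
    fun a => ⟨Fin.snoc x a, by simp⟩, ?_, ?_⟩
  · intro e
    apply Subtype.ext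
    dsimp only
    have h := Fin.snoc_init_self e.1
    rw [e.2] at h
    exact h
  · intro a
    simp

lemma card_tail_fiber (m : ℕ) (x : Fin m → A) :
    Fintype.card {e : Fin (m+1) → A // Fin.tail e = x} = Fintype.card A := by
  refine Fintype.card_congr ⟨fun e => e.1 0,
    fun a => ⟨Fin.cons a x, by simp⟩, ?_, ?_⟩
  · intro e
    apply Subtype.ext
    dsimp only
    have h := Fin.cons_self_tail e.1
    rw [e.2] at h
    exact h
  · intro a
    simp

lemma debruijn_conn [Nonempty A] (m : ℕ) (u v : Fin m → A) :
    Relation.ReflTransGen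
      (fun a b => ∃ e : Fin (m+1) → A, Fin.init e = a ∧ Fin.tail e = b) u v := by
  set ww : ℕ → ℕ → A := fun t jj =>
    if h1 : jj + t < m then u ⟨jj + t, h1⟩
    else if h2 : jj + t - m < m then v ⟨jj + t - m, h2⟩
    else Classical.arbitrary A with hww
  set w : ℕ → (Fin m → A) := fun t j => ww t (j : ℕ) with hwdef
  have hswap : ∀ t jj, ww t (jj + 1) = ww (t + 1) jj := by
    intro t jj
    simp only [hww]
    split_ifs <;> first
      | rfl
      | omega
      | (congr 1
         all_goals exact Fin.mk_eq_mk.mpr (by omega))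
  have hw0 : w 0 = u := by
    funext j
    simp only [hwdef, hww]
    rw [dif_pos (by omega : (j : ℕ) + 0 < m)]
    congr 1
    all_goals exact Fin.ext (by simp)

  have hwm : w m = v := by
    funext j
    have hj : (j : ℕ) < m := j.isLt
    simp only [hwdef, hww]
    rw [dif_neg (by omega), dif_pos (by omega : (j : ℕ) + m - m < m)]
    congr 1
    all_goals exact Fin.ext (by simp)
  have hstep : ∀ t, t < m →
      (fun a b => ∃ e : Fin (m+1) → A, Fin.init e = a ∧ Fin.tail e = b)
        (w t) (w (t+1)) := by
    intro t ht
    refine ⟨fun j => ww t (j : ℕ), ?_, ?_⟩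
    · funext j
      simp [Fin.init, hwdef]
    · funext j
      show ww t ((j.succ : Fin (m+1)) : ℕ) = w (t+1) j
      have : ((j.succ : Fin (m+1)) : ℕ) = (j : ℕ) + 1 := rfl
      rw [this, hswap]
  have key : ∀ t, t ≤ m →
      Relation.ReflTransGen
        (fun a b => ∃ e : Fin (m+1) → A, Fin.init e = a ∧ Fin.tail e = b)
        (w (m - t)) (w m) := by
    intro t
    induction t with
    | zero => intro _; rw [Nat.sub_zero]
    | succ r ihr =>
        intro h
        have h1 : m - (r + 1) < m := by omega
        have h2 := hstep (m - (r + 1)) h1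
        have heq : m - (r + 1) + 1 = m - r := by omega
        rw [heq] at h2
        exact Relation.ReflTransGen.head h2 (ihr (by omega))
  have := key m le_rfl
  rw [Nat.sub_self, hw0, hwm] at this
  exact this

end DeBruijnGraph

/-- For any finite alphabet `A` with `|A| = n ≥ 2` and any `k ≥ 1`, there is a
de Bruijn sequence of order `k` over `A`: a cyclic sequence of length `n^k` in
which every string in `A^k` occurs exactly once as a cyclic substring. -/
theorem deBruijn_exists (A : Type) [Fintype A] (n k : ℕ)
    (hA : Fintype.card A = n) (hn : 2 ≤ n) (hk : 1 ≤ k) :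
    ∃ σ : ZMod (n ^ k) → A,
      ∀ w : Fin k → A,
        ∃! i : ZMod (n ^ k), ∀ j : Fin k, σ (i + (j : ℕ)) = w j := by
  classical
  obtain ⟨m, rfl⟩ : ∃ m, k = m + 1 := ⟨k - 1, by omega⟩
  have hA2 : 2 ≤ Fintype.card A := by rw [hA]; exact hn
  haveI : Nonempty A := Fintype.card_pos_iff.mp (by omega)
  have hbal : ∀ x : Fin m → A,
      cnt (Fin.init : (Fin (m+1) → A) → (Fin m → A)) x
          (Finset.univ : Finset (Fin (m+1) → A)).toList
        = cnt (Fin.tail : (Fin (m+1) → A) → (Fin m → A)) x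
          (Finset.univ : Finset (Fin (m+1) → A)).toList := by
    intro x
    rw [cnt_univ, cnt_univ, card_init_fiber, card_tail_fiber]
  obtain ⟨v₀, L, hnd, hall, hwL⟩ :=
    euler_exists (Fin.init : (Fin (m+1) → A) → (Fin m → A)) Fin.tail hbal
      (debruijn_conn m) ⟨fun _ => Classical.arbitrary A⟩
  set N := n ^ (m + 1) with hN
  have hcardE : Fintype.card (Fin (m+1) → A) = N := by
    rw [Fintype.card_fun, Fintype.card_fin, hA]
  have hlenL : L.length = N := by
    have h1 : L.toFinset = Finset.univ :=
      Finset.eq_univ_iff_forall.mpr (fun e => List.mem_toFinset.mpr (hall e))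
    have h2 := List.toFinset_card_of_nodup hnd
    rw [← hcardE, ← Finset.card_univ, ← h1, h2]
  have hNpos : 0 < N := by positivity
  haveI : NeZero N := ⟨by omega⟩
  have hidx : ∀ i : ZMod N, (ZMod.val i) < L.length := by
    intro i; rw [hlenL]; exact ZMod.val_lt i
  set F : ZMod N → (Fin (m+1) → A) := fun i => L.get ⟨ZMod.val i, hidx i⟩ with hF
  have hFinj : Function.Injective F := by
    intro i j hij
    have h := List.nodup_iff_injective_get.mp hnd hij
    have hval : ZMod.val i = ZMod.val j := congrArg Fin.val h
    exact ZMod.val_injective N hval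
  have hFbij : Function.Bijective F := by
    refine (Fintype.bijective_iff_injective_and_card F).mpr ⟨hFinj, ?_⟩
    rw [ZMod.card, hcardE]
  have hcastval : ∀ i : ZMod N, ((ZMod.val i : ℕ) : ZMod N) = i :=
    fun i => ZMod.natCast_rightInverse i
  have hshift : ∀ i : ZMod N, Fin.tail (F i) = Fin.init (F (i + 1)) := by
    intro i
    have hlt : ZMod.val i < N := ZMod.val_lt i
    by_cases hc : ZMod.val i + 1 < N
    · have hv : ZMod.val (i + 1) = ZMod.val i + 1 := by
        have h1 : i + 1 = ((ZMod.val i + 1 : ℕ) : ZMod N) := by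
          rw [Nat.cast_add, Nat.cast_one, hcastval i]
        rw [h1, ZMod.val_cast_of_lt hc]
      have h2 := wk_get Fin.init Fin.tail hwL (ZMod.val i) (by rw [hlenL]; exact hc)
      rw [hF]
      simp only
      have hidx3 : (⟨ZMod.val (i+1), hidx (i+1)⟩ : Fin L.length)
          = ⟨ZMod.val i + 1, by rw [hlenL]; exact hc⟩ := Fin.mk_eq_mk.mpr hv
      rw [hidx3, h2]
    · have hv : ZMod.val (i + 1) = 0 := by
        have h1 : i + 1 = ((ZMod.val i + 1 : ℕ) : ZMod N) := by
          rw [Nat.cast_add, Nat.cast_one, hcastval i]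
        have h3 : ZMod.val i + 1 = N := by omega
        rw [h1, h3, ZMod.natCast_self, ZMod.val_zero]
      have hL0 : 0 < L.length := by rw [hlenL]; omega
      have h1 := wk_getlast Fin.init Fin.tail hwL hL0
      have h2 := wk_head Fin.init Fin.tail hwL hL0
      rw [hF]
      simp only
      have hidx1 : (⟨ZMod.val i, hidx i⟩ : Fin L.length) = ⟨L.length - 1, by omega⟩ :=
        Fin.mk_eq_mk.mpr (by omega)
      have hidx2 : (⟨ZMod.val (i+1), hidx (i+1)⟩ : Fin L.length) = ⟨0, hL0⟩ :=
        Fin.mk_eq_mk.mpr hv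
      rw [hidx1, hidx2, h1, h2]
  set σ : ZMod N → A := fun i => F i ⟨0, by omega⟩ with hσ
  have hwin : ∀ (j : ℕ) (hj : j < m + 1) (i : ZMod N),
      σ (i + (j : ℕ)) = F i ⟨j, hj⟩ := by
    intro j
    induction j with
    | zero =>
        intro hj i
        simp only [Nat.cast_zero, add_zero, hσ]
    | succ r ihr =>
        intro hj i
        have h1 : i + ((r + 1 : ℕ) : ZMod N) = (i + 1) + (r : ℕ) := by
          push_cast; ring
        rw [h1, ihr (by omega) (i + 1)]
        have hr : r < m := by omega
        exact (congrFun (hshift i) ⟨r, hr⟩).symm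
  refine ⟨σ, ?_⟩
  intro w
  obtain ⟨i, hi⟩ := hFbij.surjective w
  refine ⟨i, ?_, ?_⟩
  · intro j
    have h := hwin (j : ℕ) j.isLt i
    rw [h, ← hi]
  · intro y hy
    apply hFinj
    rw [hi]
    funext j
    have h := hwin (j : ℕ) j.isLt y
    rw [← hy j, h]
end

section
/- Let f = f₁·f₂ be a product of homogeneous non-commutative polynomials of degrees d₁ and d₂, and let J ⊆ [d₁+d₂] be an interval of length ℓ. If J ⊆ [1,d₁], then f^J equals a scalar multiple of f₁^J (namely f₁^J times the sum of coefficients of f₂); if J ⊆ [d₁+1, d₁+d₂], then f^J is a scalar multiple of f₂^{J−d₁}; otherwise J contains both positions d₁ and d₁+1, and there are at most ℓ−1 such intervals. -/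
/-- Non-commutative polynomials in `n` variables over `F` (the free algebra,
presented as the monoid algebra of the free monoid on `Fin n`). -/
abbrev NCPoly (F : Type) [CommSemiring F] (n : ℕ) : Type :=
  MonoidAlgebra F (FreeMonoid (Fin n))

/-- `f` is homogeneous of degree `d`: every monomial of `f` is a word of length `d`. -/
def IsHomog {F : Type} [CommSemiring F] {n : ℕ} (d : ℕ) (f : NCPoly F n) : Prop :=
  ∀ w ∈ f.coeff.support, (FreeMonoid.toList w).length = d

/-- Restriction `f^J` for the interval `J = [a,b]` (1-indexed positions): the
linear extension of `x_{j_1}⋯x_{j_d} ↦ x_{j_a}⋯x_{j_b}`. -/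
noncomputable def NCrestrict {F : Type} [CommSemiring F] {n : ℕ} (a b : ℕ)
    (f : NCPoly F n) : NCPoly F n :=
  MonoidAlgebra.ofCoeff <| Finsupp.mapDomain
    (fun w => FreeMonoid.ofList (((FreeMonoid.toList w).drop (a - 1)).take (b + 1 - a))) f.coeff

/-- Sum of the coefficients of `f` (i.e. `f^∅`). -/
noncomputable def coeffSum {F : Type} [CommSemiring F] {n : ℕ} (f : NCPoly F n) : F :=
  Finsupp.sum f.coeff (fun _ c => c)

lemma single_sum_aux {F : Type} [CommSemiring F] {n : ℕ} (f : NCPoly F n)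
    (k : FreeMonoid (Fin n)) (c : F) :
    (Finsupp.sum f.coeff fun _ c₂ => Finsupp.single k (c * c₂)) = Finsupp.single k (c * coeffSum f) := by
  rw [coeffSum, Finsupp.sum, Finsupp.sum, Finset.mul_sum, Finsupp.single_finset_sum]

lemma single_sum_aux' {F : Type} [CommSemiring F] {n : ℕ} (f : NCPoly F n)
    (k : FreeMonoid (Fin n)) (c : F) :
    (Finsupp.sum f.coeff fun _ c₁ => Finsupp.single k (c₁ * c)) = Finsupp.single k (coeffSum f * c) := by
  rw [coeffSum, Finsupp.sum, Finsupp.sum, Finset.sum_mul, Finsupp.single_finset_sum]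

lemma mapDomain_mul_aux {F : Type} [CommSemiring F] {n : ℕ} (f₁ f₂ : NCPoly F n)
    (g : FreeMonoid (Fin n) → FreeMonoid (Fin n)) :
    Finsupp.mapDomain g (f₁ * f₂).coeff
      = Finsupp.sum f₁.coeff fun w₁ c₁ => Finsupp.sum f₂.coeff fun w₂ c₂ =>
          Finsupp.single (g (w₁ * w₂)) (c₁ * c₂) := by
  rw [MonoidAlgebra.mul_def, MonoidAlgebra.coeff_finsuppSum, Finsupp.mapDomain_sum]
  exact Finsupp.sum_congr fun w₁ _ => by
    rw [MonoidAlgebra.coeff_finsuppSum, Finsupp.mapDomain_sum]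
    exact Finsupp.sum_congr fun w₂ _ => by
      rw [MonoidAlgebra.coeff_single, Finsupp.mapDomain_single]

/-- If `f = f₁·f₂` with `f₁, f₂` homogeneous of degrees `d₁, d₂`, and
`J = [a,b] ⊆ [d₁+d₂]` is an interval of length `ℓ = b - a + 1`, then:
if `J ⊆ [1,d₁]` then `f^J = f₂^∅ • f₁^J`; if `J ⊆ [d₁+1, d₁+d₂]` then
`f^J = f₁^∅ • f₂^{J-d₁}`; and the number of intervals of length `ℓ` in
`[d₁+d₂]` containing both `d₁` and `d₁+1` is at most `ℓ - 1`. -/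
theorem NCrestrict_mul (F : Type) [Field F] (n d₁ d₂ a b ℓ : ℕ)
    (f₁ f₂ : NCPoly F n) (h₁ : IsHomog d₁ f₁) (h₂ : IsHomog d₂ f₂)
    (ha : 1 ≤ a) (hab : a ≤ b) (hb : b ≤ d₁ + d₂) (hℓ : b + 1 = a + ℓ) :
    (b ≤ d₁ → NCrestrict a b (f₁ * f₂) = coeffSum f₂ • NCrestrict a b f₁) ∧
    (d₁ + 1 ≤ a →
      NCrestrict a b (f₁ * f₂) = coeffSum f₁ • NCrestrict (a - d₁) (b - d₁) f₂) ∧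
    ((Finset.Icc 1 (d₁ + d₂)).filter
        (fun a' => a' + ℓ - 1 ≤ d₁ + d₂ ∧ a' ≤ d₁ ∧ d₁ + 1 ≤ a' + ℓ - 1)).card
      ≤ ℓ - 1 := by
  refine ⟨?_, ?_, ?_⟩
  · intro hbd
    unfold NCrestrict
    rw [← MonoidAlgebra.ofCoeff_smul]
    congr 1
    rw [mapDomain_mul_aux, Finsupp.mapDomain, Finsupp.smul_sum]
    apply Finsupp.sum_congr
    intro w₁ hw₁
    have hl₁ := h₁ w₁ hw₁
    rw [Finsupp.sum_congr (g2 := fun w₂ c₂ => Finsupp.single (FreeMonoid.ofList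
        (((FreeMonoid.toList w₁).drop (a - 1)).take (b + 1 - a))) (f₁.coeff w₁ * c₂))
      (fun w₂ hw₂ => by
        rw [FreeMonoid.toList_mul, List.drop_append_of_le_length (by omega),
          List.take_append_of_le_length (by rw [List.length_drop]; omega)]),
      single_sum_aux, Finsupp.smul_single, smul_eq_mul, mul_comm]
  · intro had
    unfold NCrestrict
    rw [← MonoidAlgebra.ofCoeff_smul]
    congr 1
    rw [mapDomain_mul_aux, Finsupp.sum_comm, Finsupp.mapDomain, Finsupp.smul_sum]
    apply Finsupp.sum_congr
    intro w₂ hw₂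
    rw [Finsupp.sum_congr (g2 := fun w₁ c₁ => Finsupp.single (FreeMonoid.ofList
        (((FreeMonoid.toList w₂).drop (a - d₁ - 1)).take (b - d₁ + 1 - (a - d₁))))
        (c₁ * f₂.coeff w₂))
      (fun w₁ hw₁ => by
        have hl₁ := h₁ w₁ hw₁
        have e2 : b + 1 - a = b - d₁ + 1 - (a - d₁) := by omega
        rw [FreeMonoid.toList_mul, List.drop_append,
          List.drop_eq_nil_of_le (by omega), List.nil_append, hl₁]
        have e1 : a - 1 - d₁ = a - d₁ - 1 := by omega
        rw [e1, e2]),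
      single_sum_aux', Finsupp.smul_single, smul_eq_mul]
  · have hsub : ((Finset.Icc 1 (d₁ + d₂)).filter
        (fun a' => a' + ℓ - 1 ≤ d₁ + d₂ ∧ a' ≤ d₁ ∧ d₁ + 1 ≤ a' + ℓ - 1))
        ⊆ Finset.Ioc (d₁ + 1 - ℓ) d₁ := by
      intro x hx
      simp only [Finset.mem_filter, Finset.mem_Icc] at hx
      simp only [Finset.mem_Ioc]
      omega
    calc _ ≤ (Finset.Ioc (d₁ + 1 - ℓ) d₁).card := Finset.card_le_card hsub
      _ = d₁ - (d₁ + 1 - ℓ) := Nat.card_Ioc _ _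
      _ ≤ ℓ - 1 := by omega
end

section
/- Chain rule for left partial derivatives: let f ∈ F⟨x_0, x_1,...,x_n⟩, let v ∈ F⟨x_1,...,x_n⟩ be a polynomial with no constant term, and let f|_{x_0:=v} denote substitution of v for x_0. Then for every variable x_k (k ≥ 1), ∂_{x_k}(f|_{x_0:=v}) = (∂_{x_k} f)|_{x_0:=v} + (∂_{x_k} v) · (∂_{x_0} f)|_{x_0:=v}, provided v is homogeneous of degree 1 or 2 in at most two variables (so ∂_{x_k} v is a variable or a constant). -/
/-- The variable `x_i` as a non-commutative polynomial. -/
noncomputable def NCvar {F : Type} [CommSemiring F] {n : ℕ} (i : Fin n) : NCPoly F n :=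
  MonoidAlgebra.of F (FreeMonoid (Fin n)) (FreeMonoid.of i)

/-- The left partial derivative `∂_x f`: `f = x·(∂_x f) + f₁` with no monomial
of `f₁` starting with `x`. -/
noncomputable def leftDeriv {F : Type} [CommSemiring F] {n : ℕ} (x : Fin n)
    (f : NCPoly F n) : NCPoly F n :=
  Finsupp.sum f.coeff (fun w c =>
    if (FreeMonoid.toList w).head? = some x then
      MonoidAlgebra.single (FreeMonoid.ofList (FreeMonoid.toList w).tail) c
    else 0)

/-- Substitution `x_0 := v`: the algebra homomorphism fixing `x_1, …, x_n`
and sending `x_0` to `v`. -/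
noncomputable def substX0 {F : Type} [CommSemiring F] {n : ℕ} (v : NCPoly F (n + 1)) :
    NCPoly F (n + 1) →ₐ[F] NCPoly F (n + 1) :=
  MonoidAlgebra.lift F (NCPoly F (n + 1)) (FreeMonoid (Fin (n + 1)))
    (FreeMonoid.lift (fun i => if i = 0 then v else NCvar i))

section Aux
variable {F : Type} [CommSemiring F] {n : ℕ}

lemma leftDeriv_single (x : Fin n) (w : FreeMonoid (Fin n)) (c : F) :
    leftDeriv x (MonoidAlgebra.single w c) =
      if (FreeMonoid.toList w).head? = some x then
        MonoidAlgebra.single (FreeMonoid.ofList (FreeMonoid.toList w).tail) c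
      else 0 := by
  unfold leftDeriv
  rw [MonoidAlgebra.coeff_single, Finsupp.sum_single_index]
  split <;> simp

lemma leftDeriv_zero (x : Fin n) : leftDeriv x (0 : NCPoly F n) = 0 := by
  simp [leftDeriv]

lemma leftDeriv_add (x : Fin n) (f g : NCPoly F n) :
    leftDeriv x (f + g) = leftDeriv x f + leftDeriv x g := by
  unfold leftDeriv
  rw [MonoidAlgebra.coeff_add]
  apply Finsupp.sum_add_index' <;> intros <;> split <;>
    simp [MonoidAlgebra.single_add]

lemma leftDeriv_smul (x : Fin n) (c : F) (f : NCPoly F n) :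
    leftDeriv x (c • f) = c • leftDeriv x f := by
  unfold leftDeriv
  rw [MonoidAlgebra.coeff_smul]
  rw [Finsupp.sum_smul_index (by intro w; split <;> simp)]
  rw [Finsupp.smul_sum]
  apply Finsupp.sum_congr
  intro w _
  split <;> simp [MonoidAlgebra.smul_single]

end Aux

section Aux2
variable {F : Type} [CommSemiring F] {n : ℕ}

lemma leftDeriv_mul (x : Fin n) (a b : NCPoly F n) :
    leftDeriv x (a * b) = leftDeriv x a * b + a.coeff 1 • leftDeriv x b := by
  induction a using MonoidAlgebra.induction_linear with
  | zero => simp [leftDeriv_zero]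
  | add f g hf hg =>
      rw [add_mul, leftDeriv_add, hf, hg, leftDeriv_add, add_mul, MonoidAlgebra.coeff_add, Finsupp.add_apply, add_smul]
      abel
  | single u c =>
      induction b using MonoidAlgebra.induction_linear with
      | zero => simp [leftDeriv_zero]
      | add f g hf hg =>
          rw [mul_add, leftDeriv_add, hf, hg, leftDeriv_add, mul_add, smul_add]
          abel
      | single w d =>
          rw [MonoidAlgebra.single_mul_single, leftDeriv_single, leftDeriv_single,
            leftDeriv_single]
          rcases h : FreeMonoid.toList u with _ | ⟨i, t⟩
          · have hu1 : u = 1 := by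
              have := congrArg FreeMonoid.ofList h
              simpa [FreeMonoid.ofList_toList] using this
            subst hu1
            simp only [FreeMonoid.toList_mul, FreeMonoid.toList_one, List.nil_append,
              List.head?_nil, Finsupp.single_eq_same]
            split_ifs <;> simp_all [MonoidAlgebra.smul_single]
          · have hu1 : u ≠ 1 := by
              intro hu; rw [hu] at h; simp at h
            have happ : (MonoidAlgebra.single u c : NCPoly F n).coeff 1 = 0 := by
              simp [MonoidAlgebra.coeff_single, Finsupp.single_apply, hu1]
            rw [happ, zero_smul, add_zero]
            rw [FreeMonoid.toList_mul, h, List.cons_append, List.head?_cons,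
              List.head?_cons, List.tail_cons, List.tail_cons]
            split_ifs
            · rw [MonoidAlgebra.single_mul_single]
              have : FreeMonoid.ofList (t ++ FreeMonoid.toList w) =
                  FreeMonoid.ofList t * FreeMonoid.ofList (FreeMonoid.toList w) := rfl
              rw [this, FreeMonoid.ofList_toList]
            · simp
end Aux2

section Aux3
variable {F : Type} [CommSemiring F] {n : ℕ}

lemma substX0_single (v : NCPoly F (n + 1)) (w : FreeMonoid (Fin (n + 1))) (c : F) :
    substX0 v (MonoidAlgebra.single w c) =
      c • FreeMonoid.lift (fun i => if i = 0 then v else NCvar i) w := by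
  simp [substX0, MonoidAlgebra.lift_single]

lemma chain_key (v : NCPoly F (n + 1)) (hv1 : v.coeff 1 = 0)
    (k : Fin (n + 1)) (hk : k ≠ 0) (l : List (Fin (n + 1))) :
    leftDeriv k (FreeMonoid.lift (fun i => if i = 0 then v else NCvar i)
        (FreeMonoid.ofList l)) =
      substX0 v (leftDeriv k (MonoidAlgebra.single (FreeMonoid.ofList l) (1 : F)))
        + leftDeriv k v *
          substX0 v (leftDeriv 0 (MonoidAlgebra.single (FreeMonoid.ofList l) (1 : F))) := by
  set φ : Fin (n + 1) → NCPoly F (n + 1) := fun i => if i = 0 then v else NCvar i with hφ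
  rcases l with _ | ⟨i, t⟩
  · have h1 : (FreeMonoid.ofList ([] : List (Fin (n+1)))) = 1 := rfl
    rw [h1, map_one, MonoidAlgebra.one_def, leftDeriv_single]
    simp [leftDeriv_single, FreeMonoid.toList_one]
  · have hsplit : FreeMonoid.ofList (i :: t) = FreeMonoid.of i * FreeMonoid.ofList t := rfl
    rw [hsplit, map_mul, leftDeriv_mul, FreeMonoid.lift_eval_of]
    have hφ1 : (φ i).coeff 1 = 0 := by
      by_cases hi : i = 0
      · simp [hφ, hi, hv1]
      · simp [hφ, hi, NCvar, MonoidAlgebra.of_apply, MonoidAlgebra.coeff_single,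
          Finsupp.single_apply, show FreeMonoid.of i ≠ 1 from fun h => by
            simpa using congrArg FreeMonoid.toList h]
    rw [hφ1, zero_smul, add_zero]
    rw [← hsplit, leftDeriv_single, leftDeriv_single]
    simp only [FreeMonoid.toList_ofList, List.head?_cons, List.tail_cons]
    by_cases hi : i = 0
    · subst hi
      have h1 : (some (0 : Fin (n+1)) = some k) = False := by
        simp [Ne.symm hk]
      have h2 : φ 0 = v := by simp [hφ]
      rw [h2]
      simp only [h1, if_false, if_pos rfl, map_zero, zero_add, ite_true]
      rw [substX0_single, one_smul]
    · have h2 : φ i = MonoidAlgebra.single (FreeMonoid.of i) 1 := by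
        simp [hφ, hi, NCvar, MonoidAlgebra.of_apply]
      rw [h2, leftDeriv_single]
      have h0 : (some i = some (0 : Fin (n+1))) = False := by simp [hi]
      simp only [h0, if_false, map_zero, mul_zero, add_zero]
      by_cases hik : i = k
      · subst hik
        simp only [FreeMonoid.toList_of, List.head?_cons, if_pos rfl, List.tail_cons,
          ite_true]
        rw [substX0_single, one_smul]
        have h3 : (MonoidAlgebra.single (FreeMonoid.ofList ([] : List (Fin (n+1)))) (1:F)) =
            (1 : NCPoly F (n+1)) := rfl
        rw [h3, one_mul]
      · simp only [FreeMonoid.toList_of, List.head?_cons]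
        have hik' : (some i = some k) = False := by simp [hik]
        simp [hik']
end Aux3

/-- Chain rule for left partial derivatives: if `v ∈ F⟨x_1,…,x_n⟩` has no
constant term and is homogeneous of degree 1 or 2 in at most two variables,
then for every `k ≥ 1`,
`∂_{x_k}(f|_{x_0:=v}) = (∂_{x_k}f)|_{x_0:=v} + (∂_{x_k}v)·(∂_{x_0}f)|_{x_0:=v}`. -/
theorem leftDeriv_chain_rule (F : Type) [Field F] (n : ℕ)
    (f v : NCPoly F (n + 1))
    (hv0 : ∀ w ∈ v.coeff.support, (0 : Fin (n + 1)) ∉ FreeMonoid.toList w)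
    (hvconst : ∀ w ∈ v.coeff.support, FreeMonoid.toList w ≠ [])
    (hvhom : (∀ w ∈ v.coeff.support, (FreeMonoid.toList w).length = 1) ∨
             (∀ w ∈ v.coeff.support, (FreeMonoid.toList w).length = 2))
    (hvvars : ∃ y z : Fin (n + 1), ∀ w ∈ v.coeff.support,
      ∀ i ∈ FreeMonoid.toList w, i = y ∨ i = z)
    (k : Fin (n + 1)) (hk : k ≠ 0) :
    leftDeriv k (substX0 v f)
      = substX0 v (leftDeriv k f) + leftDeriv k v * substX0 v (leftDeriv 0 f) := by

  have hv1 : v.coeff 1 = 0 := by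
    by_contra h
    exact hvconst 1 (Finsupp.mem_support_iff.mpr h) (by simp [FreeMonoid.toList_one])
  induction f using MonoidAlgebra.induction_linear with
  | zero => simp [leftDeriv_zero]
  | add f g hf hg =>
      rw [map_add, leftDeriv_add, hf, hg, leftDeriv_add, leftDeriv_add, map_add, map_add,
        mul_add]
      abel
  | single w c =>
      have hkey := chain_key v hv1 k hk (FreeMonoid.toList w)
      rw [FreeMonoid.ofList_toList] at hkey
      show leftDeriv k (substX0 v (MonoidAlgebra.single w c))
          = substX0 v (leftDeriv k (MonoidAlgebra.single w c))
            + leftDeriv k v * substX0 v (leftDeriv 0 (MonoidAlgebra.single w c))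
      have hsc : (MonoidAlgebra.single w c : NCPoly F (n+1))
          = c • MonoidAlgebra.single w 1 := by
        simp [MonoidAlgebra.smul_single]
      rw [hsc, map_smul, leftDeriv_smul, substX0_single, one_smul, hkey, leftDeriv_smul,
        leftDeriv_smul, map_smul, map_smul, mul_smul_comm, ← smul_add]
end
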